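/- arXiv:1306.3644 — 6 statements merged into one kernel-verified Lean document; each statement's English description precedes it below -/
import Mathlib

section
/- Assume that (i) F(u) ≥ 0 for every u ∈ H, (ii) F has a gradient ∇F : H → H at every point, and (iii) ⟨∇F(u), u⟩ ≥ 0 for every u ∈ H. Let 0 < T ≤ ∞ and let u : [0,T) → H be a twice continuously differentiable solution of u''(t) + u'(t) + A u(t) + ∇F(u(t)) = 0 on [0,T). Then for every t ∈ [0,T): ‖u'(t)‖² + ‖u(t)‖² + ⟨A u(t), u(t)⟩ + F(u(t)) ≤ 16 (‖u'(0)‖² + ‖u(0)‖² + ⟨A u(0), u(0)⟩ + F(u(0))). -/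
open scoped RealInnerProductSpace

/-- Basic a priori estimate: on an interval `[0,T)` (with `0 < T ≤ ∞`), every twice
continuously differentiable solution of `u'' + u' + A u + ∇F(u) = 0` satisfies
`‖u'(t)‖² + ‖u(t)‖² + ⟨Au(t),u(t)⟩ + F(u(t)) ≤ 16 (‖u'(0)‖² + ‖u(0)‖² + ⟨Au(0),u(0)⟩ + F(u(0)))`. -/
theorem stmt_2
    {H : Type*} [NormedAddCommGroup H] [InnerProductSpace ℝ H] [CompleteSpace H]
    (A : H →L[ℝ] H) (hA : IsSelfAdjoint A) (hApos : ∀ u : H, 0 ≤ ⟪A u, u⟫)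
    (F : H → ℝ) (F' : H → H)
    (hFpos : ∀ u : H, 0 ≤ F u)
    (hF : ∀ u : H, HasGradientAt F (F' u) u)
    (hsign : ∀ u : H, 0 ≤ ⟪F' u, u⟫)
    (D : Set ℝ)
    (hD : D = Set.Ici (0:ℝ) ∨ ∃ T : ℝ, 0 < T ∧ D = Set.Ico 0 T)
    (u v w : ℝ → H)
    (hu : ∀ t ∈ D, HasDerivWithinAt u (v t) D t)
    (hv : ∀ t ∈ D, HasDerivWithinAt v (w t) D t)
    (hw : ContinuousOn w D)
    (heq : ∀ t ∈ D, w t + v t + A (u t) + F' (u t) = 0) :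
    ∀ t ∈ D,
      ‖v t‖^2 + ‖u t‖^2 + ⟪A (u t), u t⟫ + F (u t) ≤
        16 * (‖v 0‖^2 + ‖u 0‖^2 + ⟪A (u 0), u 0⟫ + F (u 0)) := by
  have hDconv : Convex ℝ D := by
    rcases hD with h | ⟨T, hT, h⟩ <;> subst h
    · exact convex_Ici 0
    · exact convex_Ico 0 T
  have h0D : (0:ℝ) ∈ D := by
    rcases hD with h | ⟨T, hT, h⟩ <;> subst h
    · exact Set.self_mem_Ici
    · exact ⟨le_refl 0, hT⟩
  set L : ℝ → ℝ := fun s => ⟪v s, v s⟫ + ⟪A (u s), u s⟫ + 2 * F (u s)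
      + ⟪u s, v s⟫ + (1/2) * ⟪u s, u s⟫ with hLdef
  have hsym : ∀ x y : H, ⟪A x, y⟫ = ⟪x, A y⟫ := fun x y => hA.isSymmetric x y
  have hL : ∀ s ∈ D, HasDerivWithinAt L
      (-(⟪v s, v s⟫ + ⟪A (u s), u s⟫ + ⟪F' (u s), u s⟫)) D s := by
    intro s hs
    have hAu : HasDerivWithinAt (fun r => A (u r)) (A (v s)) D s :=
      (A.hasFDerivAt).comp_hasDerivWithinAt s (hu s hs)
    have hFu : HasDerivWithinAt (fun r => F (u r)) (⟪F' (u s), v s⟫) D s := by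
      have := ((hF (u s)).hasFDerivAt).comp_hasDerivWithinAt s (hu s hs)
      simp [InnerProductSpace.toDual_apply_apply] at this
      exact this
    have h1 := HasDerivWithinAt.inner ℝ (hv s hs) (hv s hs)
    have h2 := HasDerivWithinAt.inner ℝ hAu (hu s hs)
    have h3 := HasDerivWithinAt.inner ℝ (hu s hs) (hv s hs)
    have h4 := HasDerivWithinAt.inner ℝ (hu s hs) (hu s hs)
    have hcomb := ((h1.add h2).add (hFu.const_mul 2)).add h3 |>.add (h4.const_mul (1/2))
    have hws : w s = -(v s) - A (u s) - F' (u s) := by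
      have h := heq s hs
      have : w s + (v s + A (u s) + F' (u s)) = 0 := by
        rw [← h]; abel
      have := eq_neg_of_add_eq_zero_left this
      rw [this]; abel
    convert hcomb using 1
    case e'_4 => rfl
    case e'_5 => rfl
    case e'_8 => rfl
    rw [hws]
    simp only [inner_sub_left, inner_sub_right, inner_neg_left, inner_neg_right,
      inner_add_left, inner_add_right]
    rw [real_inner_comm (F' (u s)) (v s), real_inner_comm (A (u s)) (v s),
      real_inner_comm (A (u s)) (u s), real_inner_comm (F' (u s)) (u s),
      real_inner_comm (u s) (v s), hsym (v s) (u s), real_inner_comm (v s) (A (u s))]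
    ring
  have hcont : ContinuousOn L D := fun s hs => (hL s hs).continuousWithinAt
  have hkey : ∀ x ∈ interior D,
      HasDerivAt L (-(⟪v x, v x⟫ + ⟪A (u x), u x⟫ + ⟪F' (u x), u x⟫)) x := fun x hx =>
    (hL x (interior_subset hx)).hasDerivAt (mem_interior_iff_mem_nhds.mp hx)
  have hanti : AntitoneOn L D := by
    apply antitoneOn_of_deriv_nonpos hDconv hcont
    · exact fun x hx => (hkey x hx).differentiableAt.differentiableWithinAt
    · intro x hx
      rw [(hkey x hx).deriv]
      have := real_inner_self_nonneg (x := v x)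
      have := hApos (u x)
      have := hsign (u x)
      linarith
  intro t ht
  have ht0 : 0 ≤ t := by
    rcases hD with h | ⟨T, hT, h⟩ <;> subst h
    · exact ht
    · exact ht.1
  have hLt : L t ≤ L 0 := hanti h0D ht ht0
  simp only [hLdef, real_inner_self_eq_norm_sq] at hLt
  have hp1 : -(‖u t‖ * ‖v t‖) ≤ ⟪u t, v t⟫ :=
    neg_le_of_abs_le (abs_real_inner_le_norm (u t) (v t))
  have hp2 : ⟪u 0, v 0⟫ ≤ ‖u 0‖ * ‖v 0‖ := real_inner_le_norm (u 0) (v 0)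
  have h1 := hApos (u t); have h2 := hApos (u 0)
  have h3 := hFpos (u t); have h4 := hFpos (u 0)
  nlinarith [sq_nonneg (3*‖u t‖ - 4*‖v t‖), sq_nonneg (‖u 0‖ - ‖v 0‖),
    norm_nonneg (u t), norm_nonneg (v t), norm_nonneg (u 0), norm_nonneg (v 0)]
end

section
/- Assume that: F(u) ≥ 0 for every u ∈ H and F(0) = 0; F has a gradient ∇F : H → H at every point; ∇F is Lipschitz continuous on every bounded subset of H; there exists K > 0 such that ⟨∇F(u), u⟩ ≥ K · F(u) for every u ∈ H; and there exists p > 0 such that for every bounded set B ⊆ H there is a constant R ≥ 0 with ‖u‖^{p+2} ≤ R (⟨A u, u⟩ + F(u)) for every u ∈ B. Then for every twice continuously differentiable solution u : [0,∞) → H of u''(t) + u'(t) + A u(t) + ∇F(u(t)) = 0 there exist constants M₁ and M₂ such that for every t ≥ 0: ‖u'(t)‖² + ⟨A u(t), u(t)⟩ + F(u(t)) ≤ M₁ (1+t)^{-(1+2/p)} and ‖u(t)‖ ≤ M₂ (1+t)^{-1/p}. -/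
open scoped RealInnerProductSpace NNReal
open Set

section helpers
lemma myMono {f f' : ℝ → ℝ}
    (hd : ∀ t ∈ Set.Ici (0:ℝ), HasDerivWithinAt f (f' t) (Set.Ici 0) t)
    (h0 : ∀ t ∈ Set.Ici (0:ℝ), 0 ≤ f' t) : MonotoneOn f (Set.Ici 0) := by
  exact monotoneOn_of_hasDerivWithinAt_nonneg (convex_Ici 0)
    (fun t ht => (hd t ht).continuousWithinAt)
    (fun t ht => (hd t (interior_subset ht)).mono interior_subset)
    (fun t ht => h0 t (interior_subset ht))

lemma myAnti {f f' : ℝ → ℝ}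
    (hd : ∀ t ∈ Set.Ici (0:ℝ), HasDerivWithinAt f (f' t) (Set.Ici 0) t)
    (h0 : ∀ t ∈ Set.Ici (0:ℝ), f' t ≤ 0) : AntitoneOn f (Set.Ici 0) := by
  have h := myMono (f := fun t => -f t) (f' := fun t => -f' t)
    (fun t ht => (hd t ht).neg) (fun t ht => neg_nonneg.mpr (h0 t ht))
  intro a ha b hb hab
  have := h ha hb hab
  simp only at this
  linarith
end helpers

set_option maxHeartbeats 2000000 in
/-- Upper decay estimate: under hypotheses (Hp1)-(Hp6), every twice continuously
differentiable solution of `u'' + u' + A u + ∇F(u) = 0` on `[0,∞)` satisfies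
`‖u'(t)‖² + ⟨Au(t),u(t)⟩ + F(u(t)) ≤ M₁ (1+t)^{-(1+2/p)}` and `‖u(t)‖ ≤ M₂ (1+t)^{-1/p}`. -/
theorem stmt_3
    {H : Type*} [NormedAddCommGroup H] [InnerProductSpace ℝ H] [CompleteSpace H]
    (A : H →L[ℝ] H) (hA : IsSelfAdjoint A) (hApos : ∀ u : H, 0 ≤ ⟪A u, u⟫)
    (F : H → ℝ) (F' : H → H)
    (hFpos : ∀ u : H, 0 ≤ F u) (hF0 : F 0 = 0)
    (hF : ∀ u : H, HasGradientAt F (F' u) u)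
    (hFlip : ∀ s : Set H, Bornology.IsBounded s → ∃ L : ℝ≥0, LipschitzOnWith L F' s)
    (K : ℝ) (hK : 0 < K) (hKF : ∀ u : H, K * F u ≤ ⟪F' u, u⟫)
    (p : ℝ) (hp : 0 < p)
    (hcoerc : ∀ B : Set H, Bornology.IsBounded B →
      ∃ R : ℝ, 0 ≤ R ∧ ∀ u ∈ B, ‖u‖ ^ (p + 2) ≤ R * (⟪A u, u⟫ + F u))
    (u v w : ℝ → H)
    (hu : ∀ t ∈ Set.Ici (0:ℝ), HasDerivWithinAt u (v t) (Set.Ici 0) t)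
    (hv : ∀ t ∈ Set.Ici (0:ℝ), HasDerivWithinAt v (w t) (Set.Ici 0) t)
    (hw : ContinuousOn w (Set.Ici 0))
    (heq : ∀ t ∈ Set.Ici (0:ℝ), w t + v t + A (u t) + F' (u t) = 0) :
    ∃ M₁ M₂ : ℝ, ∀ t ∈ Set.Ici (0:ℝ),
      ‖v t‖^2 + ⟪A (u t), u t⟫ + F (u t) ≤ M₁ * (1 + t) ^ (-(1 + 2/p)) ∧
      ‖u t‖ ≤ M₂ * (1 + t) ^ (-(1/p)) := by
  -- abbreviations
  set n : ℝ → ℝ := fun t => ⟪v t, v t⟫ with hndef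
  set q : ℝ → ℝ := fun t => ⟪A (u t), u t⟫ with hqdef
  set E : ℝ → ℝ := fun t => (⟪v t, v t⟫ + ⟪A (u t), u t⟫)/2 + F (u t) with hEdef
  set ρ : ℝ → ℝ := fun t => ⟪v t, u t⟫ with hρdef
  -- basic positivity
  have hn0 : ∀ t, 0 ≤ n t := fun t => real_inner_self_nonneg
  have hq0 : ∀ t, 0 ≤ q t := fun t => hApos (u t)
  have hE0 : ∀ t, 0 ≤ E t := fun t => by
    have := hFpos (u t); have := hn0 t; have := hq0 t
    simp only [hEdef]; simp only [hndef, hqdef] at *; linarith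
  have hg0 : ∀ t, 0 ≤ ⟪F' (u t), u t⟫ := fun t =>
    le_trans (mul_nonneg hK.le (hFpos (u t))) (hKF (u t))
  -- w in terms of the others
  have hw0 : ∀ t ∈ Set.Ici (0:ℝ), w t = -(v t + A (u t) + F' (u t)) := by
    intro t ht
    refine eq_neg_of_add_eq_zero_left ?_
    have h := heq t ht
    calc w t + (v t + A (u t) + F' (u t)) = w t + v t + A (u t) + F' (u t) := by abel
    _ = 0 := h
  -- derivatives
  have hAu : ∀ t ∈ Set.Ici (0:ℝ), HasDerivWithinAt (fun t => A (u t)) (A (v t)) (Set.Ici 0) t :=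
    fun t ht => (A.hasFDerivAt).comp_hasDerivWithinAt t (hu t ht)
  have hnd : ∀ t ∈ Set.Ici (0:ℝ),
      HasDerivWithinAt n (2*⟪w t, v t⟫) (Set.Ici 0) t := by
    intro t ht
    have h := HasDerivWithinAt.inner ℝ (hv t ht) (hv t ht)
    have : ⟪v t, w t⟫ + ⟪w t, v t⟫ = 2*⟪w t, v t⟫ := by rw [real_inner_comm]; ring
    rw [hndef]; rw [← this]; exact h
  have hqd : ∀ t ∈ Set.Ici (0:ℝ),
      HasDerivWithinAt q (2*⟪A (u t), v t⟫) (Set.Ici 0) t := by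
    intro t ht
    have h := HasDerivWithinAt.inner ℝ (hAu t ht) (hu t ht)
    have hsym := (ContinuousLinearMap.isSelfAdjoint_iff_isSymmetric.mp hA)
    have h3 : ⟪A (v t), u t⟫ = ⟪v t, A (u t)⟫ := hsym (v t) (u t)
    have h2 : ⟪A (u t), v t⟫ + ⟪A (v t), u t⟫ = 2*⟪A (u t), v t⟫ := by
      rw [h3, real_inner_comm]; ring
    rw [hqdef]; rw [← h2]; exact h
  have hFd : ∀ t ∈ Set.Ici (0:ℝ),
      HasDerivWithinAt (fun t => F (u t)) ⟪F' (u t), v t⟫ (Set.Ici 0) t := by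
    intro t ht
    have h1 := (hF (u t)).hasFDerivAt.comp_hasDerivWithinAt t (hu t ht)
    simpa [InnerProductSpace.toDual_apply_apply, Function.comp_def] using h1
  have hEd : ∀ t ∈ Set.Ici (0:ℝ), HasDerivWithinAt E (-(n t)) (Set.Ici 0) t := by
    intro t ht
    have h := (((hnd t ht).add (hqd t ht)).div_const 2).add (hFd t ht)
    have hval : (2*⟪w t, v t⟫ + 2*⟪A (u t), v t⟫)/2 + ⟪F' (u t), v t⟫ = -(n t) := by
      rw [hw0 t ht]
      simp only [inner_neg_left, inner_add_left, hndef]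
      ring
    rw [hEdef]; rw [← hval]; exact h
  have hρd : ∀ t ∈ Set.Ici (0:ℝ),
      HasDerivWithinAt ρ (n t + ⟪w t, u t⟫) (Set.Ici 0) t := by
    intro t ht
    have h := HasDerivWithinAt.inner ℝ (hv t ht) (hu t ht)
    rw [hρdef, hndef]
    exact h
  have huud : ∀ t ∈ Set.Ici (0:ℝ),
      HasDerivWithinAt (fun t => ⟪u t, u t⟫) (2*⟪v t, u t⟫) (Set.Ici 0) t := by
    intro t ht
    have h := HasDerivWithinAt.inner ℝ (hu t ht) (hu t ht)
    have : ⟪u t, v t⟫ + ⟪v t, u t⟫ = 2*⟪v t, u t⟫ := by rw [real_inner_comm]; ring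
    rw [← this]; exact h
  have hwu : ∀ t ∈ Set.Ici (0:ℝ), ⟪w t, u t⟫ = -(ρ t) - q t - ⟪F' (u t), u t⟫ := by
    intro t ht
    rw [hw0 t ht]
    simp only [inner_neg_left, inner_add_left, hρdef, hqdef]
    ring
  -- the auxiliary functional for boundedness
  set Φ₀ : ℝ → ℝ := fun t => 2*E t + ρ t + ⟪u t, u t⟫/2 with hΦ₀def
  have hΦ₀d : ∀ t ∈ Set.Ici (0:ℝ), HasDerivWithinAt Φ₀
      (2*(-(n t)) + (n t + ⟪w t, u t⟫) + (2*⟪v t, u t⟫)/2) (Set.Ici 0) t := by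
    intro t ht
    exact (((hEd t ht).const_mul 2).add (hρd t ht)).add ((huud t ht).div_const 2)
  have hΦ₀anti : AntitoneOn Φ₀ (Set.Ici 0) := by
    apply myAnti hΦ₀d
    intro t ht
    rw [hwu t ht]
    have := hn0 t; have := hq0 t; have := hg0 t
    have hvu : ⟪v t, u t⟫ = ρ t := by rw [hρdef]
    rw [hvu]
    linarith
  have huu_bd : ∀ t ∈ Set.Ici (0:ℝ), ⟪u t, u t⟫ ≤ 4 * Φ₀ 0 := by
    intro t ht
    have h1 : Φ₀ t ≤ Φ₀ 0 := hΦ₀anti (self_mem_Ici) ht ht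
    have hexp : ⟪v t + (2⁻¹:ℝ) • u t, v t + (2⁻¹:ℝ) • u t⟫
        = n t + ρ t + (1/4)*⟪u t, u t⟫ := by
      simp only [real_inner_add_add_self, real_inner_smul_left, real_inner_smul_right,
        hndef, hρdef]
      ring
    have h2 : (0:ℝ) ≤ n t + ρ t + (1/4)*⟪u t, u t⟫ := by
      rw [← hexp]; exact real_inner_self_nonneg
    have h3 : (1/4)*⟪u t, u t⟫ ≤ Φ₀ t := by
      have := hq0 t; have := hFpos (u t)
      simp only [hΦ₀def, hEdef, hndef, hqdef, hρdef] at h2 ⊢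
      linarith
    have h5 := le_trans h3 h1
    have h6 := mul_le_mul_of_nonneg_left h5 (by norm_num : (0:ℝ) ≤ 4)
    calc ⟪u t, u t⟫ = 4*(1/4 * ⟪u t, u t⟫) := by ring
    _ ≤ 4 * Φ₀ 0 := h6
  -- uniform bound on u, coercivity constant
  set r : ℝ := Real.sqrt (4 * Φ₀ 0) with hrdef
  have hr : ∀ t ∈ Set.Ici (0:ℝ), ‖u t‖ ≤ r := by
    intro t ht
    have h1 : ‖u t‖^2 ≤ 4 * Φ₀ 0 := by
      rw [← real_inner_self_eq_norm_sq]; exact huu_bd t ht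
    calc ‖u t‖ = Real.sqrt (‖u t‖^2) := by rw [Real.sqrt_sq (norm_nonneg _)]
    _ ≤ r := Real.sqrt_le_sqrt h1
  obtain ⟨R, hR0, hRc⟩ := hcoerc (Metric.closedBall 0 r) Metric.isBounded_closedBall
  have hcu : ∀ t ∈ Set.Ici (0:ℝ), ‖u t‖ ^ (p+2) ≤ 2*R * E t := by
    intro t ht
    have h1 : ‖u t‖ ^ (p+2) ≤ R * (q t + F (u t)) := by
      refine hRc (u t) ?_
      rw [Metric.mem_closedBall, dist_zero_right]
      exact hr t ht
    have h2 : q t + F (u t) ≤ 2 * E t := by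
      have := hn0 t; have := hFpos (u t)
      simp only [hEdef, hndef, hqdef] at *
      linarith
    calc ‖u t‖ ^ (p+2) ≤ R * (q t + F (u t)) := h1
    _ ≤ R * (2 * E t) := mul_le_mul_of_nonneg_left h2 hR0
    _ = 2*R * E t := by ring
  have hp2 : (0:ℝ) < p + 2 := by linarith
  set c₁ : ℝ := (2*R) ^ ((p+2)⁻¹ : ℝ) with hc₁def
  have hc₁0 : 0 ≤ c₁ := Real.rpow_nonneg (by linarith) _
  have hub : ∀ t ∈ Set.Ici (0:ℝ), ‖u t‖ ≤ c₁ * E t ^ ((p+2)⁻¹ : ℝ) := by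
    intro t ht
    have h2 : (‖u t‖ ^ (p+2)) ^ ((p+2)⁻¹ : ℝ) ≤ (2*R * E t) ^ ((p+2)⁻¹ : ℝ) :=
      Real.rpow_le_rpow (Real.rpow_nonneg (norm_nonneg _) _) (hcu t ht)
        (inv_nonneg.mpr hp2.le)
    have h3 : (‖u t‖ ^ (p+2)) ^ ((p+2)⁻¹ : ℝ) = ‖u t‖ := by
      rw [← Real.rpow_mul (norm_nonneg _), mul_inv_cancel₀ hp2.ne', Real.rpow_one]
    have h4 : (2*R * E t) ^ ((p+2)⁻¹ : ℝ) = c₁ * E t ^ ((p+2)⁻¹ : ℝ) := by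
      rw [Real.mul_rpow (by linarith) (hE0 t)]
    rw [← h3, ← h4]; exact h2
  have hEanti : AntitoneOn E (Set.Ici 0) := myAnti hEd (fun t _ => neg_nonpos.mpr (hn0 t))
  have hnv : ∀ t, n t = ‖v t‖^2 := fun t => by
    rw [hndef]; exact real_inner_self_eq_norm_sq (v t)
  have hr0 : 0 ≤ r := by rw [hrdef]; exact Real.sqrt_nonneg _
  by_cases hpos : ∀ t ∈ Set.Ici (0:ℝ), 0 < E t
  · -- main case : E is always positive
    have hE0pos : 0 < E 0 := hpos 0 self_mem_Ici
    have hvb : ∀ t ∈ Set.Ici (0:ℝ), ‖v t‖ ≤ Real.sqrt 2 * E t^((1/2:ℝ)) := by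
      intro t ht
      have e1 : ‖v t‖^2 ≤ 2*E t := by
        rw [← hnv]
        have := hq0 t; have := hFpos (u t)
        simp only [hEdef, hndef, hqdef] at *
        linarith
      calc ‖v t‖ = Real.sqrt (‖v t‖^2) := by rw [Real.sqrt_sq (norm_nonneg _)]
      _ ≤ Real.sqrt (2*E t) := Real.sqrt_le_sqrt e1
      _ = Real.sqrt 2 * Real.sqrt (E t) := Real.sqrt_mul (by norm_num) _
      _ = Real.sqrt 2 * E t^((1/2:ℝ)) := by rw [Real.sqrt_eq_rpow (E t)]
    set α : ℝ := p/(p+2) with hαdef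
    have hα : 0 < α := div_pos hp hp2
    set βc : ℝ := p/(2*(p+2)) with hβcdef
    have hβc0 : (0:ℝ) ≤ βc := by positivity
    set E₀ : ℝ := E 0 with hE₀def
    have hE₀nn : 0 ≤ E₀ := hE0 0
    set k : ℝ := min 1 K with hkdef
    have hk : 0 < k := lt_min one_pos hK
    have hk1 : k ≤ 1 := min_le_left _ _
    have hkK : k ≤ K := min_le_right _ _
    set CB : ℝ := Real.sqrt 2 * c₁ * E₀ ^ (βc:ℝ) with hCBdef
    have hCB0 : 0 ≤ CB := mul_nonneg (mul_nonneg (Real.sqrt_nonneg 2) hc₁0)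
      (Real.rpow_nonneg hE₀nn _)
    set CA : ℝ := α*CB + E₀^(α:ℝ) + c₁^2/k + (k/2)*E₀^(α:ℝ) with hCAdef
    have hE₀α : 0 ≤ E₀^(α:ℝ) := Real.rpow_nonneg hE₀nn _
    have hCA0 : 0 ≤ CA := by
      rw [hCAdef]
      have h1 : 0 ≤ α*CB := mul_nonneg hα.le hCB0
      have h2 : 0 ≤ c₁^2/k := div_nonneg (sq_nonneg _) hk.le
      have h3 : 0 ≤ (k/2)*E₀^(α:ℝ) := mul_nonneg (by linarith) hE₀α
      linarith
    set ε : ℝ := min (1/(2*(CA+1))) (1/(2*(CB+1))) with hεdef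
    have hε : 0 < ε := lt_min (by positivity) (by positivity)
    have hεbd : ∀ C : ℝ, 0 ≤ C → ε ≤ 1/(2*(C+1)) → ε*C ≤ 1/2 := by
      intro C hC hle
      have h2 : (1/(2*(C+1))) * C ≤ 1/2 := by
        rw [div_mul_eq_mul_div, div_le_div_iff₀ (by positivity) (by norm_num)]
        nlinarith
      calc ε*C ≤ (1/(2*(C+1)))*C := mul_le_mul_of_nonneg_right hle hC
      _ ≤ 1/2 := h2
    have hεCA : ε*CA ≤ 1/2 := hεbd CA hCA0 (min_le_left _ _)
    have hεCB : ε*CB ≤ 1/2 := hεbd CB hCB0 (min_le_right _ _)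
    -- the perturbed energy
    set Φ : ℝ → ℝ := fun s => E s + ε * (E s ^ (α:ℝ) * ρ s) with hΦdef
    have hΦd : ∀ t ∈ Set.Ici (0:ℝ), HasDerivWithinAt Φ
        (-n t + ε * (-n t * α * E t^(α-1) * ρ t + E t^(α:ℝ) * (n t + ⟪w t, u t⟫)))
        (Set.Ici 0) t := by
      intro t ht
      exact (hEd t ht).add
        ((((hEd t ht).rpow_const (Or.inl (hpos t ht).ne')).mul (hρd t ht)).const_mul ε)
    -- pointwise differential inequality
    have hD : ∀ t ∈ Set.Ici (0:ℝ),
        -n t + ε * (-n t * α * E t^(α-1) * ρ t + E t^(α:ℝ) * (n t + ⟪w t, u t⟫))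
          ≤ -(ε*(3*k/4)) * E t^((1+α:ℝ)) := by
      intro t ht
      have he := hpos t ht
      have heE₀ : E t ≤ E₀ := hEanti self_mem_Ici ht ht
      have hre : ∀ x y : ℝ, E t^(x:ℝ) * E t^(y:ℝ) = E t^((x+y:ℝ)) :=
        fun x y => (Real.rpow_add he x y).symm
      have hρb : |ρ t| ≤ ‖v t‖ * ‖u t‖ := by
        rw [hρdef]; exact abs_real_inner_le_norm _ _
      have hρb2 : |ρ t| ≤ (Real.sqrt 2 * E t^((1/2:ℝ))) * (c₁ * E t^(((p+2)⁻¹:ℝ))) :=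
        le_trans hρb (mul_le_mul (hvb t ht) (hub t ht) (norm_nonneg _) (by positivity))
      have hEβ : E t^(βc:ℝ) ≤ E₀^(βc:ℝ) := Real.rpow_le_rpow he.le heE₀ hβc0
      have hEα : E t^(α:ℝ) ≤ E₀^(α:ℝ) := Real.rpow_le_rpow he.le heE₀ hα.le
      have hEtα : 0 ≤ E t^(α:ℝ) := Real.rpow_nonneg he.le _
      -- term 1
      have hrp1 : E t^((α-1:ℝ)) * (E t^((1/2:ℝ)) * E t^(((p+2)⁻¹:ℝ))) = E t^(βc:ℝ) := by
        rw [hre, hre]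
        congr 1
        rw [hαdef, hβcdef]
        field_simp
        ring
      have h1 : -n t * α * E t^(α-1) * ρ t ≤ α*CB * n t := by
        have e0 : 0 ≤ n t * α * E t^((α-1:ℝ)) :=
          mul_nonneg (mul_nonneg (hn0 t) hα.le) (Real.rpow_nonneg he.le _)
        have eabs : |(-n t * α * E t^((α-1:ℝ)))| = n t * α * E t^((α-1:ℝ)) := by
          rw [show -n t * α * E t^((α-1:ℝ)) = -(n t * α * E t^((α-1:ℝ))) by ring,
            abs_neg, abs_of_nonneg e0]
        calc -n t * α * E t^(α-1) * ρ t ≤ |(-n t * α * E t^(α-1)) * ρ t| := le_abs_self _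
        _ = (n t * α * E t^((α-1:ℝ))) * |ρ t| := by rw [abs_mul, eabs]
        _ ≤ (n t * α * E t^((α-1:ℝ))) *
            ((Real.sqrt 2 * E t^((1/2:ℝ))) * (c₁ * E t^(((p+2)⁻¹:ℝ)))) :=
          mul_le_mul_of_nonneg_left hρb2 e0
        _ = α * (Real.sqrt 2 * c₁) *
            (E t^((α-1:ℝ)) * (E t^((1/2:ℝ)) * E t^(((p+2)⁻¹:ℝ)))) * n t := by ring
        _ = α * (Real.sqrt 2 * c₁) * E t^(βc:ℝ) * n t := by rw [hrp1]
        _ ≤ α * (Real.sqrt 2 * c₁) * E₀^(βc:ℝ) * n t := by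
          apply mul_le_mul_of_nonneg_right _ (hn0 t)
          exact mul_le_mul_of_nonneg_left hEβ
            (mul_nonneg hα.le (mul_nonneg (Real.sqrt_nonneg 2) hc₁0))
        _ = α*CB * n t := by rw [hCBdef]; ring
      -- term 2
      have h2 : E t^(α:ℝ) * n t ≤ E₀^(α:ℝ) * n t :=
        mul_le_mul_of_nonneg_right hEα (hn0 t)
      -- term 3 (Young)
      have hrp3 : E t^((α:ℝ)) * E t^(((p+2)⁻¹:ℝ)) = E t^(((1+α)/2:ℝ)) := by
        rw [hre]
        congr 1
        rw [hαdef]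
        field_simp
        ring
      have hYY : E t^(((1+α)/2:ℝ)) * E t^(((1+α)/2:ℝ)) = E t^((1+α:ℝ)) := by
        rw [hre]
        congr 1
        ring
      have h3 : E t^(α:ℝ) * (-ρ t) ≤ c₁^2/k * n t + k/4 * E t^((1+α:ℝ)) := by
        have e1 : E t^(α:ℝ) * (-ρ t) ≤ E t^(α:ℝ) * (‖v t‖ * (c₁ * E t^(((p+2)⁻¹:ℝ)))) := by
          apply mul_le_mul_of_nonneg_left _ hEtα
          calc -ρ t ≤ |ρ t| := neg_le_abs _
          _ ≤ ‖v t‖ * ‖u t‖ := hρb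
          _ ≤ ‖v t‖ * (c₁ * E t^(((p+2)⁻¹:ℝ))) :=
            mul_le_mul_of_nonneg_left (hub t ht) (norm_nonneg _)
        have e2 : E t^(α:ℝ) * (‖v t‖ * (c₁ * E t^(((p+2)⁻¹:ℝ))))
            = c₁ * ‖v t‖ * E t^(((1+α)/2:ℝ)) := by
          rw [← hrp3]; ring
        have e3 : c₁ * ‖v t‖ * E t^(((1+α)/2:ℝ)) ≤ c₁^2/k * n t + k/4 * E t^((1+α:ℝ)) := by
          rw [← hYY, hnv]
          have key2 : 0 ≤ 4*c₁^2*‖v t‖^2 - 4*k*(c₁*‖v t‖*E t^(((1+α)/2:ℝ)))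
              + k^2*(E t^(((1+α)/2:ℝ))*E t^(((1+α)/2:ℝ))) := by
            calc (0:ℝ) ≤ (2*c₁*‖v t‖ - k*E t^(((1+α)/2:ℝ)))^2 := sq_nonneg _
            _ = _ := by ring
          have h4k : (0:ℝ) < 4*k := by linarith
          rw [← mul_le_mul_iff_right₀ h4k]
          have hrhs : 4*k*(c₁^2/k*‖v t‖^2 + k/4*(E t^(((1+α)/2:ℝ))*E t^(((1+α)/2:ℝ))))
              = 4*c₁^2*‖v t‖^2 + k^2*(E t^(((1+α)/2:ℝ))*E t^(((1+α)/2:ℝ))) := by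
            field_simp
          rw [hrhs]
          linarith only [key2]
        calc E t^(α:ℝ) * (-ρ t) ≤ E t^(α:ℝ) * (‖v t‖ * (c₁ * E t^(((p+2)⁻¹:ℝ)))) := e1
        _ = c₁ * ‖v t‖ * E t^(((1+α)/2:ℝ)) := e2
        _ ≤ c₁^2/k * n t + k/4 * E t^((1+α:ℝ)) := e3
      -- term 4
      have hrpE : E t^(α:ℝ) * E t = E t^((1+α:ℝ)) := by
        nth_rewrite 2 [← Real.rpow_one (E t)]
        rw [hre]
        congr 1
        ring
      have hqg : k*(E t - n t/2) ≤ q t + ⟪F' (u t), u t⟫ := by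
        have a1 : k * F (u t) ≤ K * F (u t) := mul_le_mul_of_nonneg_right hkK (hFpos _)
        have a2 := hKF (u t)
        have a3 : k * q t ≤ q t := by
          calc k * q t ≤ 1 * q t := mul_le_mul_of_nonneg_right hk1 (hq0 t)
          _ = q t := one_mul _
        have hEexp : E t - n t/2 = q t/2 + F (u t) := by
          simp only [hEdef, hndef, hqdef]; ring
        rw [hEexp]
        have a4 := hq0 t
        have a5 : k * (q t/2 + F (u t)) = k*q t/2 + k*F (u t) := by ring
        rw [a5]
        linarith only [a1, a2, a3, a4]
      have h4 : E t^(α:ℝ) * (-q t - ⟪F' (u t), u t⟫)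
          ≤ -(k * E t^((1+α:ℝ))) + k/2 * (E₀^(α:ℝ) * n t) := by
        have e1 : E t^(α:ℝ) * (k*(E t - n t/2)) ≤ E t^(α:ℝ) * (q t + ⟪F' (u t), u t⟫) :=
          mul_le_mul_of_nonneg_left hqg hEtα
        have e2 : E t^(α:ℝ) * (k*(E t - n t/2))
            = k * (E t^(α:ℝ) * E t) - k/2 * (E t^(α:ℝ) * n t) := by ring
        have e3 : E t^(α:ℝ) * n t ≤ E₀^(α:ℝ) * n t := h2
        have e4 : k/2 * (E t^(α:ℝ) * n t) ≤ k/2 * (E₀^(α:ℝ) * n t) :=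
          mul_le_mul_of_nonneg_left e3 (by linarith)
        rw [e2, hrpE] at e1
        linarith only [e1, e4]
      -- assemble
      have hsum : E t^(α:ℝ) * (n t + ⟪w t, u t⟫)
          = E t^(α:ℝ)*n t + E t^(α:ℝ)*(-ρ t) + E t^(α:ℝ)*(-q t - ⟪F' (u t), u t⟫) := by
        rw [hwu t ht]; ring
      have k1 := mul_le_mul_of_nonneg_left h1 hε.le
      have k2 := mul_le_mul_of_nonneg_left h2 hε.le
      have k3 := mul_le_mul_of_nonneg_left h3 hε.le
      have k4 := mul_le_mul_of_nonneg_left h4 hε.le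
      have h5 : ε*CA*n t ≤ 1/2*n t := mul_le_mul_of_nonneg_right hεCA (hn0 t)
      have h6 : ε*(α*CB*n t) + ε*(E₀^(α:ℝ)*n t) + ε*(c₁^2/k*n t + k/4*E t^((1+α:ℝ)))
          + ε*(-(k*E t^((1+α:ℝ))) + k/2*(E₀^(α:ℝ)*n t))
          = ε*CA*n t - ε*(3*k/4)*E t^((1+α:ℝ)) := by
        rw [hCAdef]; ring
      calc -n t + ε * (-n t * α * E t^(α-1) * ρ t + E t^(α:ℝ) * (n t + ⟪w t, u t⟫))
          = -n t + ε*(-n t * α * E t^(α-1) * ρ t) + ε*(E t^(α:ℝ)*n t)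
            + ε*(E t^(α:ℝ)*(-ρ t)) + ε*(E t^(α:ℝ)*(-q t - ⟪F' (u t), u t⟫)) := by
            rw [hsum]; ring
      _ ≤ -n t + ε*(α*CB*n t) + ε*(E₀^(α:ℝ)*n t) + ε*(c₁^2/k*n t + k/4*E t^((1+α:ℝ)))
            + ε*(-(k*E t^((1+α:ℝ))) + k/2*(E₀^(α:ℝ)*n t)) := by
            have h7 := add_le_add (add_le_add (add_le_add (add_le_add (le_refl (-n t)) k1) k2) k3) k4
            linarith only [h7]
      _ = -n t + (ε*CA*n t - ε*(3*k/4)*E t^((1+α:ℝ))) := by rw [← h6]; ring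
      _ ≤ -(ε*(3*k/4)) * E t^((1+α:ℝ)) := by
            linarith only [h5, hn0 t]
    -- comparison between Φ and E
    have hΦcmp : ∀ t ∈ Set.Ici (0:ℝ), E t/2 ≤ Φ t ∧ Φ t ≤ 3/2 * E t := by
      intro t ht
      have he := hpos t ht
      have heE₀ : E t ≤ E₀ := hEanti self_mem_Ici ht ht
      have hre : ∀ x y : ℝ, E t^(x:ℝ) * E t^(y:ℝ) = E t^((x+y:ℝ)) :=
        fun x y => (Real.rpow_add he x y).symm
      have hρb : |ρ t| ≤ ‖v t‖ * ‖u t‖ := by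
        rw [hρdef]; exact abs_real_inner_le_norm _ _
      have hρb2 : |ρ t| ≤ (Real.sqrt 2 * E t^((1/2:ℝ))) * (c₁ * E t^(((p+2)⁻¹:ℝ))) :=
        le_trans hρb (mul_le_mul (hvb t ht) (hub t ht) (norm_nonneg _) (by positivity))
      have hEtα : 0 ≤ E t^(α:ℝ) := Real.rpow_nonneg he.le _
      have hrp2 : E t^(α:ℝ) * (E t^((1/2:ℝ)) * E t^(((p+2)⁻¹:ℝ))) = E t^(βc:ℝ) * E t := by
        calc E t^(α:ℝ) * (E t^((1/2:ℝ)) * E t^(((p+2)⁻¹:ℝ)))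
            = E t^((α + (1/2 + (p+2)⁻¹):ℝ)) := by rw [hre, hre]
        _ = E t^((βc + 1:ℝ)) := by
            congr 1
            rw [hαdef, hβcdef]
            field_simp
            ring
        _ = E t^(βc:ℝ) * E t := by rw [Real.rpow_add he, Real.rpow_one]
      have habs : |E t^(α:ℝ) * ρ t| ≤ CB * E t := by
        rw [abs_mul, abs_of_nonneg hEtα]
        calc E t^(α:ℝ) * |ρ t|
            ≤ E t^(α:ℝ) * ((Real.sqrt 2 * E t^((1/2:ℝ))) * (c₁ * E t^(((p+2)⁻¹:ℝ)))) :=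
            mul_le_mul_of_nonneg_left hρb2 hEtα
        _ = Real.sqrt 2 * c₁ * (E t^(α:ℝ) * (E t^((1/2:ℝ)) * E t^(((p+2)⁻¹:ℝ)))) := by ring
        _ = Real.sqrt 2 * c₁ * (E t^(βc:ℝ) * E t) := by rw [hrp2]
        _ ≤ Real.sqrt 2 * c₁ * (E₀^(βc:ℝ) * E t) := by
            apply mul_le_mul_of_nonneg_left _ (mul_nonneg (Real.sqrt_nonneg 2) hc₁0)
            exact mul_le_mul_of_nonneg_right (Real.rpow_le_rpow he.le heE₀ hβc0) he.le
        _ = CB * E t := by rw [hCBdef]; ring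
      have hmain : |ε * (E t^(α:ℝ) * ρ t)| ≤ 1/2 * E t := by
        rw [abs_mul, abs_of_nonneg hε.le]
        calc ε * |E t^(α:ℝ) * ρ t| ≤ ε * (CB * E t) := mul_le_mul_of_nonneg_left habs hε.le
        _ = (ε*CB) * E t := by ring
        _ ≤ 1/2 * E t := mul_le_mul_of_nonneg_right hεCB he.le
      have h1 := abs_le.mp hmain
      constructor
      · have h2 := h1.1
        simp only [hΦdef]
        linarith only [h2]
      · have h2 := h1.2
        simp only [hΦdef]
        linarith only [h2]
    have hΦpos : ∀ t ∈ Set.Ici (0:ℝ), 0 < Φ t := fun t ht =>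
      lt_of_lt_of_le (half_pos (hpos t ht)) (hΦcmp t ht).1
    set c : ℝ := ε*(3*k/4)*((2/3:ℝ))^((1+α:ℝ)) with hcdef
    have hc : 0 < c := by
      apply mul_pos (by positivity) (Real.rpow_pos_of_pos (by norm_num) _)
    have hDc : ∀ t ∈ Set.Ici (0:ℝ),
        -n t + ε * (-n t * α * E t^(α-1) * ρ t + E t^(α:ℝ) * (n t + ⟪w t, u t⟫))
          ≤ -(c * Φ t^((1+α:ℝ))) := by
      intro t ht
      have hΦt := hΦpos t ht
      have h1 : Φ t^((1+α:ℝ)) ≤ (3/2*E t)^((1+α:ℝ)) :=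
        Real.rpow_le_rpow hΦt.le (hΦcmp t ht).2 (by linarith only [hα])
      have h2 : ((2/3:ℝ))^((1+α:ℝ)) * (3/2*E t)^((1+α:ℝ)) = E t^((1+α:ℝ)) := by
        rw [← Real.mul_rpow (by norm_num) (mul_nonneg (by norm_num) (hE0 t))]
        rw [show (2/3:ℝ)*(3/2*E t) = E t by ring]
      have h3 : c * Φ t^((1+α:ℝ)) ≤ ε*(3*k/4) * E t^((1+α:ℝ)) := by
        rw [hcdef]
        calc ε*(3*k/4)*((2/3:ℝ))^((1+α:ℝ)) * Φ t^((1+α:ℝ))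
            = ε*(3*k/4) * (((2/3:ℝ))^((1+α:ℝ)) * Φ t^((1+α:ℝ))) := by ring
        _ ≤ ε*(3*k/4) * (((2/3:ℝ))^((1+α:ℝ)) * (3/2*E t)^((1+α:ℝ))) := by
            apply mul_le_mul_of_nonneg_left _ (by positivity)
            exact mul_le_mul_of_nonneg_left h1 (Real.rpow_nonneg (by norm_num) _)
        _ = ε*(3*k/4) * E t^((1+α:ℝ)) := by rw [h2]
      have h4 := hD t ht
      linarith only [h3, h4]
    -- the comparison function ψ = Φ^(-α) - α c t is nondecreasing
    have hψd : ∀ t ∈ Set.Ici (0:ℝ), HasDerivWithinAt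
        (fun s => Φ s^((-α:ℝ)) - (α*c)*s)
        ((-n t + ε * (-n t * α * E t^(α-1) * ρ t + E t^(α:ℝ) * (n t + ⟪w t, u t⟫)))
          * (-α) * Φ t^((-α:ℝ)-1) - (α*c)*1) (Set.Ici 0) t := by
      intro t ht
      exact ((hΦd t ht).rpow_const (Or.inl (hΦpos t ht).ne')).sub
        ((hasDerivWithinAt_id t _).const_mul (α*c))
    have hψmono : MonotoneOn (fun s => Φ s^((-α:ℝ)) - (α*c)*s) (Set.Ici 0) := by
      apply myMono hψd
      intro t ht
      have hΦt := hΦpos t ht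
      have hD' := hDc t ht
      have e1 : Φ t^((1+α:ℝ)) * Φ t^((-α:ℝ)-1) = 1 := by
        rw [← Real.rpow_add hΦt, show (1+α) + (-α-1) = 0 by ring, Real.rpow_zero]
      have e2 : 0 ≤ Φ t^((-α:ℝ)-1) := Real.rpow_nonneg hΦt.le _
      have e3 : c * Φ t^((1+α:ℝ)) ≤
          -(-n t + ε * (-n t * α * E t^(α-1) * ρ t + E t^(α:ℝ) * (n t + ⟪w t, u t⟫))) := by
        linarith only [hD']
      have e4 := mul_le_mul_of_nonneg_right e3 e2
      have e5 : c * Φ t^((1+α:ℝ)) * Φ t^((-α:ℝ)-1) = c := by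
        rw [mul_assoc, e1, mul_one]
      rw [e5] at e4
      have e6 := mul_le_mul_of_nonneg_left e4 hα.le
      linarith only [e6]
    set c₂ : ℝ := min (Φ 0^((-α:ℝ))) (α*c) with hc₂def
    have hc₂ : 0 < c₂ := lt_min (Real.rpow_pos_of_pos (hΦpos 0 self_mem_Ici) _) (mul_pos hα hc)
    have hΦdecay : ∀ t ∈ Set.Ici (0:ℝ), Φ t ≤ c₂^((-α⁻¹:ℝ)) * (1+t)^((-α⁻¹:ℝ)) := by
      intro t ht
      have ht0 : (0:ℝ) ≤ t := ht
      have h1t : (0:ℝ) < 1 + t := by linarith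
      have hm := hψmono self_mem_Ici ht ht0
      simp only at hm
      have h2 : c₂*(1+t) ≤ Φ t^((-α:ℝ)) := by
        have i1 : c₂ ≤ Φ 0^((-α:ℝ)) := min_le_left _ _
        have i2 : c₂*t ≤ (α*c)*t := mul_le_mul_of_nonneg_right (min_le_right _ _) ht0
        linarith only [hm, i1, i2]
      have h3 : (Φ t^((-α:ℝ)))^((-α⁻¹:ℝ)) ≤ (c₂*(1+t))^((-α⁻¹:ℝ)) :=
        Real.rpow_le_rpow_of_nonpos (by positivity) h2
          (neg_nonpos.mpr (inv_nonneg.mpr hα.le))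
      have h4 : (Φ t^((-α:ℝ)))^((-α⁻¹:ℝ)) = Φ t := by
        rw [← Real.rpow_mul (hΦpos t ht).le,
          show (-α)*(-α⁻¹) = α*α⁻¹ by ring, mul_inv_cancel₀ hα.ne', Real.rpow_one]
      have h5 : (c₂*(1+t))^((-α⁻¹:ℝ)) = c₂^((-α⁻¹:ℝ)) * (1+t)^((-α⁻¹:ℝ)) :=
        Real.mul_rpow hc₂.le h1t.le
      rw [h4, h5] at h3
      exact h3
    -- conclusion
    refine ⟨4*c₂^((-α⁻¹:ℝ)), c₁*(2*c₂^((-α⁻¹:ℝ)))^(((p+2)⁻¹:ℝ)), ?_⟩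
    intro t ht
    have ht0 : (0:ℝ) ≤ t := ht
    have h1t : (0:ℝ) < 1 + t := by linarith
    have hEfin : E t ≤ 2*(c₂^((-α⁻¹:ℝ)) * (1+t)^((-α⁻¹:ℝ))) := by
      have i1 := (hΦcmp t ht).1
      have i2 := hΦdecay t ht
      linarith only [i1, i2]
    have hexp₁ : ((-α⁻¹:ℝ)) = -(1+2/p) := by
      rw [hαdef, inv_div]
      field_simp
    constructor
    · have hLHS : n t + q t + F (u t) ≤ 2*E t := by
        have hFt := hFpos (u t)
        simp only [hEdef, hndef, hqdef] at hFt ⊢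
        linarith only [hFt]
      rw [← hnv]
      calc n t + q t + F (u t) ≤ 2*E t := hLHS
      _ ≤ 4*(c₂^((-α⁻¹:ℝ)) * (1+t)^((-α⁻¹:ℝ))) := by linarith only [hEfin]
      _ = 4*c₂^((-α⁻¹:ℝ)) * (1+t)^((-α⁻¹:ℝ)) := by ring
      _ = 4*c₂^((-α⁻¹:ℝ)) * (1+t)^(-(1+2/p)) := by rw [hexp₁]
    · have h1 : ‖u t‖ ≤ c₁ * E t^(((p+2)⁻¹:ℝ)) := hub t ht
      have h2 : E t^(((p+2)⁻¹:ℝ)) ≤ (2*(c₂^((-α⁻¹:ℝ)) * (1+t)^((-α⁻¹:ℝ))))^(((p+2)⁻¹:ℝ)) :=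
        Real.rpow_le_rpow (hE0 t) hEfin (by positivity)
      have h3 : (2*(c₂^((-α⁻¹:ℝ)) * (1+t)^((-α⁻¹:ℝ))))^(((p+2)⁻¹:ℝ))
          = (2*c₂^((-α⁻¹:ℝ)))^(((p+2)⁻¹:ℝ)) * ((1+t)^((-α⁻¹:ℝ)))^(((p+2)⁻¹:ℝ)) := by
        rw [show 2*(c₂^((-α⁻¹:ℝ)) * (1+t)^((-α⁻¹:ℝ)))
          = (2*c₂^((-α⁻¹:ℝ))) * (1+t)^((-α⁻¹:ℝ)) by ring]
        exact Real.mul_rpow (by positivity) (Real.rpow_nonneg h1t.le _)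
      have h4 : ((1+t)^((-α⁻¹:ℝ)))^(((p+2)⁻¹:ℝ)) = (1+t)^(-(1/p)) := by
        rw [← Real.rpow_mul h1t.le]
        congr 1
        rw [hαdef, inv_div]
        field_simp
      calc ‖u t‖ ≤ c₁ * E t^(((p+2)⁻¹:ℝ)) := h1
      _ ≤ c₁ * ((2*c₂^((-α⁻¹:ℝ)))^(((p+2)⁻¹:ℝ)) * (1+t)^(-(1/p))) := by
          rw [← h4, ← h3]
          exact mul_le_mul_of_nonneg_left h2 hc₁0
      _ = c₁*(2*c₂^((-α⁻¹:ℝ)))^(((p+2)⁻¹:ℝ)) * (1+t)^(-(1/p)) := by ring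


  · -- trivial case : the energy vanishes at some time t₀
    push_neg at hpos
    obtain ⟨t₀, ht₀, hEt₀⟩ := hpos
    have ht₀0 : (0:ℝ) ≤ t₀ := ht₀
    refine ⟨2*E 0*(1+t₀)^((1+2/p):ℝ), r*(1+t₀)^((1/p):ℝ), ?_⟩
    intro t ht
    have ht0 : (0:ℝ) ≤ t := ht
    have h1t : (0:ℝ) < 1 + t := by linarith
    have h1t₀ : (0:ℝ) < 1 + t₀ := by linarith
    have hβ0 : (0:ℝ) ≤ 1 + 2/p := by positivity
    have hγ0 : (0:ℝ) ≤ 1/p := by positivity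
    rcases le_or_gt t t₀ with hle | hlt
    · have hEt : E t ≤ E 0 := hEanti self_mem_Ici ht ht0
      have hLHS : ‖v t‖^2 + q t + F (u t) ≤ 2*E 0 := by
        rw [← hnv]
        have := hFpos (u t)
        simp only [hEdef, hndef, hqdef] at hEt ⊢
        linarith
      constructor
      · have hx : (1:ℝ) ≤ (1+t₀)^((1+2/p):ℝ) * (1+t)^(-(1+2/p):ℝ) := by
          rw [Real.rpow_neg h1t.le, ← div_eq_mul_inv,
            le_div_iff₀ (Real.rpow_pos_of_pos h1t _), one_mul]
          exact Real.rpow_le_rpow h1t.le (by linarith) hβ0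
        calc ‖v t‖^2 + q t + F (u t) ≤ 2*E 0 := hLHS
        _ = 2*E 0 * 1 := (mul_one _).symm
        _ ≤ 2*E 0 * ((1+t₀)^((1+2/p):ℝ) * (1+t)^(-(1+2/p):ℝ)) :=
            mul_le_mul_of_nonneg_left hx (by linarith [hE0 0])
        _ = 2*E 0*(1+t₀)^((1+2/p):ℝ) * (1+t)^(-(1+2/p):ℝ) := by ring
      · have hx : (1:ℝ) ≤ (1+t₀)^((1/p):ℝ) * (1+t)^(-(1/p):ℝ) := by
          rw [Real.rpow_neg h1t.le, ← div_eq_mul_inv,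
            le_div_iff₀ (Real.rpow_pos_of_pos h1t _), one_mul]
          exact Real.rpow_le_rpow h1t.le (by linarith) hγ0
        calc ‖u t‖ ≤ r := hr t ht
        _ = r * 1 := (mul_one _).symm
        _ ≤ r * ((1+t₀)^((1/p):ℝ) * (1+t)^(-(1/p):ℝ)) := mul_le_mul_of_nonneg_left hx hr0
        _ = r*(1+t₀)^((1/p):ℝ) * (1+t)^(-(1/p):ℝ) := by ring
    · have hEt : E t ≤ 0 := le_trans (hEanti ht₀ ht hlt.le) hEt₀
      have e1 : n t + q t + 2*F (u t) ≤ 0 := by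
        simp only [hEdef, hndef, hqdef] at hEt ⊢
        linarith
      have hFt := hFpos (u t); have hnt := hn0 t; have hqt := hq0 t
      constructor
      · have hLHS : ‖v t‖^2 + q t + F (u t) ≤ 0 := by rw [← hnv]; linarith
        have hRHS : 0 ≤ 2*E 0*(1+t₀)^((1+2/p):ℝ) * (1+t)^(-(1+2/p):ℝ) := by
          have := hE0 0
          positivity
        linarith
      · have hu0 : ‖u t‖ ≤ 0 := by
          by_contra hcon
          push_neg at hcon
          have h1 := Real.rpow_pos_of_pos hcon (p+2)
          have h2 : 2*R*E t ≤ 0 := mul_nonpos_of_nonneg_of_nonpos (by linarith) hEt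
          linarith [hcu t ht]
        have hRHS : 0 ≤ r*(1+t₀)^((1/p):ℝ) * (1+t)^(-(1/p):ℝ) := by positivity
        linarith
end

section
/- For every real p > 0 and all real numbers a and b: |(1/(p+2)) (|a+b|^{p+2} − |a|^{p+2}) − |a|^{p} a b| ≤ (p+1) · 2^{p−1} · (|a|^{p} + |b|^{p}) · b². -/
open Real intervalIntegral

private lemma cont_absrpow {p : ℝ} (hp : 0 ≤ p) : Continuous fun x : ℝ => |x| ^ p :=
  continuous_abs.rpow_const fun _ => Or.inr hp

private lemma hasDerivAt_G {p : ℝ} (hp : 0 < p) (x : ℝ) :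
    HasDerivAt (fun y : ℝ => |y| ^ p * y) ((p + 1) * |x| ^ p) x := by
  rcases lt_trichotomy x 0 with hx | hx | hx
  · have hev : (fun y : ℝ => |y| ^ p * y) =ᶠ[nhds x] fun y : ℝ => -((-y) ^ (p + 1)) := by
      filter_upwards [eventually_lt_nhds hx] with y hy
      rw [abs_of_neg hy, Real.rpow_add_one (by linarith)]
      ring
    have h1 : HasDerivAt (fun y : ℝ => (-y) ^ (p + 1)) ((p + 1) * (-x) ^ (p + 1 - 1) * (-1)) x :=
      (Real.hasDerivAt_rpow_const (x := -x) (p := p + 1) (Or.inl (by linarith))).comp x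
        (hasDerivAt_neg x)
    have h2 := h1.neg
    have : -((p + 1) * (-x) ^ (p + 1 - 1) * (-1)) = (p + 1) * |x| ^ p := by
      rw [abs_of_neg hx]; ring_nf
    rw [this] at h2
    exact h2.congr_of_eventuallyEq hev
  · subst hx
    have h0 : (fun y : ℝ => |y| ^ p) =ᶠ[nhdsWithin 0 {(0:ℝ)}ᶜ]
        slope (fun y : ℝ => |y| ^ p * y) 0 := by
      filter_upwards [self_mem_nhdsWithin] with y hy
      have hy' : y ≠ 0 := hy
      rw [slope_def_field]
      field_simp
      simp
    have hcont : Filter.Tendsto (fun y : ℝ => |y| ^ p) (nhdsWithin 0 {(0:ℝ)}ᶜ)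
        (nhds ((p + 1) * |(0:ℝ)| ^ p)) := by
      have := ((cont_absrpow hp.le).tendsto 0).mono_left (nhdsWithin_le_nhds (s := {(0:ℝ)}ᶜ))
      simpa [Real.zero_rpow hp.ne'] using this
    rw [hasDerivAt_iff_tendsto_slope]
    exact hcont.congr' h0
  · have hev : (fun y : ℝ => |y| ^ p * y) =ᶠ[nhds x] fun y : ℝ => y ^ (p + 1) := by
      filter_upwards [eventually_gt_nhds hx] with y hy
      rw [abs_of_pos hy, Real.rpow_add_one hy.ne']
    have h1 : HasDerivAt (fun y : ℝ => y ^ (p + 1)) ((p + 1) * x ^ (p + 1 - 1)) x :=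
      Real.hasDerivAt_rpow_const (Or.inl hx.ne')
    have : (p + 1) * x ^ (p + 1 - 1) = (p + 1) * |x| ^ p := by
      rw [abs_of_pos hx]; ring_nf
    rw [this] at h1
    exact h1.congr_of_eventuallyEq hev

private lemma hasDerivAt_F {p : ℝ} (hp : 0 < p) (x : ℝ) :
    HasDerivAt (fun y : ℝ => |y| ^ (p + 2)) ((p + 2) * (|x| ^ p * x)) x := by
  have habs : ∀ y : ℝ, |y| ^ (p + 2) = |y| ^ p * y ^ 2 := by
    intro y
    rcases eq_or_ne y 0 with rfl | hy
    · simp [Real.zero_rpow (by positivity : p + 2 ≠ 0), Real.zero_rpow hp.ne']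
    · rw [show p + 2 = p + 1 + 1 by ring, Real.rpow_add_one (abs_ne_zero.mpr hy),
        Real.rpow_add_one (abs_ne_zero.mpr hy), mul_assoc, ← sq_abs]
      ring
  rcases lt_trichotomy x 0 with hx | hx | hx
  · have hev : (fun y : ℝ => |y| ^ (p + 2)) =ᶠ[nhds x] fun y : ℝ => (-y) ^ (p + 2) := by
      filter_upwards [eventually_lt_nhds hx] with y hy
      rw [abs_of_neg hy]
    have h1 : HasDerivAt (fun y : ℝ => (-y) ^ (p + 2)) ((p + 2) * (-x) ^ (p + 2 - 1) * (-1)) x :=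
      (Real.hasDerivAt_rpow_const (x := -x) (p := p + 2) (Or.inl (by linarith))).comp x
        (hasDerivAt_neg x)
    have : (p + 2) * (-x) ^ (p + 2 - 1) * (-1) = (p + 2) * (|x| ^ p * x) := by
      rw [abs_of_neg hx, show p + 2 - 1 = p + 1 by ring,
        Real.rpow_add_one (by linarith : -x ≠ 0)]
      ring
    rw [this] at h1
    exact h1.congr_of_eventuallyEq hev
  · subst hx
    have h0 : (fun y : ℝ => |y| ^ p * y) =ᶠ[nhdsWithin 0 {(0:ℝ)}ᶜ]
        slope (fun y : ℝ => |y| ^ (p + 2)) 0 := by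
      filter_upwards [self_mem_nhdsWithin] with y hy
      have hy' : (y:ℝ) ≠ 0 := hy
      rw [slope_def_field, habs y]
      field_simp
      rw [abs_zero, Real.zero_rpow (by positivity : p + 2 ≠ 0)]
      ring
    have hcont : Filter.Tendsto (fun y : ℝ => |y| ^ p * y) (nhdsWithin 0 {(0:ℝ)}ᶜ)
        (nhds ((p + 2) * (|(0:ℝ)| ^ p * 0))) := by
      have := (((cont_absrpow hp.le).mul continuous_id).tendsto 0).mono_left (nhdsWithin_le_nhds (s := {(0:ℝ)}ᶜ))
      simpa [Real.zero_rpow hp.ne', Pi.mul_def] using this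
    rw [hasDerivAt_iff_tendsto_slope]
    exact hcont.congr' h0
  · have hev : (fun y : ℝ => |y| ^ (p + 2)) =ᶠ[nhds x] fun y : ℝ => y ^ (p + 2) := by
      filter_upwards [eventually_gt_nhds hx] with y hy
      rw [abs_of_pos hy]
    have h1 : HasDerivAt (fun y : ℝ => y ^ (p + 2)) ((p + 2) * x ^ (p + 2 - 1)) x :=
      Real.hasDerivAt_rpow_const (Or.inl hx.ne')
    have : (p + 2) * x ^ (p + 2 - 1) = (p + 2) * (|x| ^ p * x) := by
      rw [abs_of_pos hx, show p + 2 - 1 = p + 1 by ring, Real.rpow_add_one hx.ne']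
    rw [this] at h1
    exact h1.congr_of_eventuallyEq hev

/-- Second-order Taylor estimate for `σ ↦ |σ|^{p+2}`: for every `p > 0` and all reals `a, b`,
`|(1/(p+2))(|a+b|^{p+2} - |a|^{p+2}) - |a|^p a b| ≤ (p+1) 2^{p-1} (|a|^p + |b|^p) b²`. -/
theorem stmt_8 (p : ℝ) (hp : 0 < p) (a b : ℝ) :
    |(1/(p + 2)) * (|a + b| ^ (p + 2) - |a| ^ (p + 2)) - |a| ^ p * a * b| ≤
      (p + 1) * (2 : ℝ) ^ (p - 1) * (|a| ^ p + |b| ^ p) * b ^ 2 := by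
  set G : ℝ → ℝ := fun y => |y| ^ p * y with hGdef
  set M : ℝ := |a| + |b| with hM
  have hM0 : 0 ≤ M := by positivity
  -- Lipschitz bound on the segment
  have hLip : ∀ t ∈ Set.Icc (0:ℝ) 1, |G (a + t * b) - G a| ≤ (p + 1) * M ^ p * (t * |b|) := by
    intro t ht
    have hseg : ∀ x ∈ Set.uIcc a (a + t * b), |x| ≤ M := by
      intro x hx
      have h1 : |x| ≤ max |a| |a + t * b| := by
        rcases Set.uIcc_subset_uIcc_iff_mem.mpr ⟨Set.left_mem_uIcc, Set.right_mem_uIcc⟩ hx with h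
        rw [Set.mem_uIcc] at hx
        rcases hx with ⟨h1, h2⟩ | ⟨h1, h2⟩
        · exact abs_le_max_abs_abs h1 h2
        · exact (abs_le_max_abs_abs h1 h2).trans (by rw [max_comm])
      have h2 : |a + t * b| ≤ |a| + |b| := by
        calc |a + t * b| ≤ |a| + |t * b| := abs_add_le _ _
          _ ≤ |a| + |b| := by
              have : |t * b| ≤ |b| := by
                rw [abs_mul, abs_of_nonneg ht.1]
                nlinarith [abs_nonneg b, ht.2]
              linarith
      exact h1.trans (max_le (by simp [hM, abs_nonneg]) h2)
    have hmvt := Convex.norm_image_sub_le_of_norm_hasDerivWithin_le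
      (f := G) (f' := fun x => (p + 1) * |x| ^ p) (s := Set.uIcc a (a + t * b))
      (C := (p + 1) * M ^ p)
      (fun x _ => (hasDerivAt_G hp x).hasDerivWithinAt)
      (fun x hx => by
        have h := Real.rpow_le_rpow (abs_nonneg x) (hseg x hx) hp.le
        have h2 : ‖(p + 1) * |x| ^ p‖ ≤ (p + 1) * M ^ p := by
          rw [Real.norm_eq_abs, abs_of_nonneg (by positivity)]
          nlinarith
        simpa using h2)
      (convex_uIcc _ _) Set.left_mem_uIcc Set.right_mem_uIcc
    simpa [Real.norm_eq_abs, abs_mul, abs_of_nonneg ht.1] using hmvt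
  -- FTC
  have haff : ∀ t : ℝ, HasDerivAt (fun t : ℝ => a + t * b) b t := fun t => by
    simpa using ((hasDerivAt_id t).mul_const b).const_add a
  have hcontG : Continuous fun t : ℝ => G (a + t * b) := by
    have hc : Continuous fun t : ℝ => a + t * b := by continuity
    exact ((cont_absrpow hp.le).comp hc).mul hc
  have hftc : ∫ t in (0:ℝ)..1, (p + 2) * G (a + t * b) * b
      = |a + b| ^ (p + 2) - |a| ^ (p + 2) := by
    have := intervalIntegral.integral_eq_sub_of_hasDerivAt
      (f := fun t : ℝ => |a + t * b| ^ (p + 2))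
      (f' := fun t : ℝ => (p + 2) * G (a + t * b) * b)
      (a := 0) (b := 1)
      (fun t _ => by
        have := (hasDerivAt_F hp (a + t * b)).comp t (haff t)
        simpa [hGdef, Function.comp_def] using this)
      (((continuous_const.mul hcontG).mul continuous_const).intervalIntegrable 0 1)
    simpa using this
  have hne : (p : ℝ) + 2 ≠ 0 := by positivity
  have hint1 : ∫ t in (0:ℝ)..1, G (a + t * b) * b
      = (1/(p + 2)) * (|a + b| ^ (p + 2) - |a| ^ (p + 2)) := by
    rw [← hftc, ← intervalIntegral.integral_const_mul]
    rw [show (fun t => (1/(p+2)) * ((p + 2) * G (a + t * b) * b))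
        = fun t => G (a + t * b) * b by funext t; field_simp]
  have hR : (1/(p + 2)) * (|a + b| ^ (p + 2) - |a| ^ (p + 2)) - |a| ^ p * a * b
      = ∫ t in (0:ℝ)..1, (G (a + t * b) - G a) * b := by
    rw [show (fun t => (G (a + t * b) - G a) * b)
        = fun t => G (a + t * b) * b - G a * b by funext t; ring]
    rw [intervalIntegral.integral_sub (by exact (hcontG.mul continuous_const).intervalIntegrable 0 1 : IntervalIntegrable (fun t => G (a + t * b) * b) MeasureTheory.volume 0 1)
      (intervalIntegrable_const), hint1]
    simp [hGdef]
  rw [hR]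
  -- bound the integral
  have hbound : |∫ t in (0:ℝ)..1, (G (a + t * b) - G a) * b|
      ≤ (p + 1) * M ^ p * b ^ 2 * (1/2) := by
    have h1 : ‖∫ t in (0:ℝ)..1, (G (a + t * b) - G a) * b‖
        ≤ |∫ t in (0:ℝ)..1, (p + 1) * M ^ p * b ^ 2 * t| := by
      apply intervalIntegral.norm_integral_le_abs_of_norm_le
      · rw [Set.uIoc_of_le (by norm_num : (0:ℝ) ≤ 1)]
        filter_upwards [MeasureTheory.ae_restrict_mem measurableSet_Ioc] with t ht
        have ht' : t ∈ Set.Icc (0:ℝ) 1 := ⟨ht.1.le, ht.2⟩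
        rw [Real.norm_eq_abs, abs_mul]
        calc |G (a + t * b) - G a| * |b| ≤ ((p + 1) * M ^ p * (t * |b|)) * |b| := by
              have := hLip t ht'
              have hb := abs_nonneg b
              nlinarith
          _ = (p + 1) * M ^ p * b ^ 2 * t := by rw [← sq_abs b]; ring
      · exact (continuous_const.mul continuous_id).intervalIntegrable 0 1
    rw [Real.norm_eq_abs] at h1
    refine h1.trans ?_
    rw [intervalIntegral.integral_const_mul, integral_id]
    rw [abs_of_nonneg (by positivity)]
    ring_nf
    norm_num
  refine hbound.trans ?_
  -- final elementary estimate
  have hMp : M ^ p ≤ 2 ^ p * (|a| ^ p + |b| ^ p) := by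
    have h1 : M ≤ 2 * max |a| |b| := by
      rcases le_total |a| |b| with h | h
      · rw [max_eq_right h]; simp only [hM]; linarith
      · rw [max_eq_left h]; simp only [hM]; linarith
    have h2 : M ^ p ≤ (2 * max |a| |b|) ^ p := Real.rpow_le_rpow hM0 h1 hp.le
    have h3 : (2 * max |a| |b|) ^ p = 2 ^ p * (max |a| |b|) ^ p :=
      Real.mul_rpow (by norm_num) (le_max_of_le_left (abs_nonneg a))
    have h4 : (max |a| |b|) ^ p ≤ |a| ^ p + |b| ^ p := by
      rcases le_total |a| |b| with h | h
      · rw [max_eq_right h]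
        have := Real.rpow_nonneg (abs_nonneg a) p
        linarith
      · rw [max_eq_left h]
        have := Real.rpow_nonneg (abs_nonneg b) p
        linarith
    calc M ^ p ≤ 2 ^ p * (max |a| |b|) ^ p := by rw [← h3]; exact h2
      _ ≤ 2 ^ p * (|a| ^ p + |b| ^ p) := by
          have : (0:ℝ) < 2 ^ p := Real.rpow_pos_of_pos (by norm_num) p
          nlinarith
  have h2p : (2:ℝ) ^ (p - 1) = 2 ^ p / 2 := by
    rw [Real.rpow_sub (by norm_num : (0:ℝ) < 2), Real.rpow_one]
  rw [h2p]
  have hb2 : (0:ℝ) ≤ b ^ 2 := sq_nonneg b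
  have hp1 : (0:ℝ) < p + 1 := by linarith
  have key : (p + 1) * M ^ p * b ^ 2 ≤ (p + 1) * (2 ^ p * (|a| ^ p + |b| ^ p)) * b ^ 2 :=
    mul_le_mul_of_nonneg_right (mul_le_mul_of_nonneg_left hMp hp1.le) hb2
  linarith
end

section
/- Let H be a real Hilbert space, let K be a finite-dimensional subspace of H, and let M be a closed subspace of H such that M^⊥ ∩ K = {0}. Let P_K and P_M denote the orthogonal projections of H onto K and M respectively. Then there exists a constant C such that ‖u‖² ≤ C (‖P_M u‖² + ‖u − P_K u‖²) for every u ∈ H. -/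
/-- If `K` is a finite-dimensional subspace and `M` a closed subspace with `M^⊥ ∩ K = {0}`,
then `‖u‖² ≤ C (‖P_M u‖² + ‖u - P_K u‖²)` for every `u ∈ H`. -/
theorem stmt_11
    {H : Type*} [NormedAddCommGroup H] [InnerProductSpace ℝ H] [CompleteSpace H]
    (K M : Submodule ℝ H) [FiniteDimensional ℝ K]
    (hMclosed : IsClosed (M : Set H))
    (hKM : Mᗮ ⊓ K = ⊥)
    (PK PM : H →L[ℝ] H)
    (hPK : ∀ x : H, PK x ∈ K ∧ x - PK x ∈ Kᗮ)
    (hPM : ∀ x : H, PM x ∈ M ∧ x - PM x ∈ Mᗮ) :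
    ∃ C : ℝ, ∀ u : H, ‖u‖^2 ≤ C * (‖PM u‖^2 + ‖u - PK u‖^2) := by
  have hpyth : ∀ (S : Submodule ℝ H) (a b : H), a ∈ S → b ∈ Sᗮ →
      ‖a + b‖^2 = ‖a‖^2 + ‖b‖^2 := by
    intro S a b ha hb
    have h0 : (inner ℝ a b : ℝ) = 0 := Submodule.inner_right_of_mem_orthogonal ha hb
    rw [norm_add_sq_real, h0]; ring
  have hMle : ∀ x : H, ‖PM x‖ ≤ ‖x‖ := by
    intro x
    have h := hpyth M (PM x) (x - PM x) (hPM x).1 (hPM x).2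
    rw [add_sub_cancel] at h
    nlinarith [norm_nonneg (PM x), norm_nonneg x, sq_nonneg (‖x - PM x‖)]
  set T : K →ₗ[ℝ] H := PM.toLinearMap.comp K.subtype with hT
  have hker : LinearMap.ker T = ⊥ := by
    rw [LinearMap.ker_eq_bot']
    intro k hk
    have hk' : PM (k : H) = 0 := hk
    have hkM : (k : H) ∈ Mᗮ := by
      have h2 := (hPM (k : H)).2
      rwa [hk', sub_zero] at h2
    have hmem : (k : H) ∈ Mᗮ ⊓ K := ⟨hkM, k.2⟩
    rw [hKM] at hmem
    exact Subtype.ext (by simpa using hmem)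
  obtain ⟨c, hc0, hc⟩ := T.exists_antilipschitzWith hker
  have hcoer : ∀ k : K, ‖(k : H)‖ ≤ (c : ℝ) * ‖PM (k : H)‖ := by
    intro k
    have := hc.le_mul_dist k 0
    simpa [dist_zero_right, map_zero, hT] using this
  refine ⟨2 * (c : ℝ)^2 + 1, ?_⟩
  intro u
  have hdecomp : ‖u‖^2 = ‖PK u‖^2 + ‖u - PK u‖^2 := by
    have h := hpyth K (PK u) (u - PK u) (hPK u).1 (hPK u).2
    rwa [add_sub_cancel] at h
  have h1 : ‖PK u‖ ≤ (c : ℝ) * ‖PM (PK u)‖ := hcoer ⟨PK u, (hPK u).1⟩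
  have h2 : ‖PM (PK u)‖ ≤ ‖PM u‖ + ‖u - PK u‖ := by
    have heq : PM (PK u) = PM u - PM (u - PK u) := by
      rw [← map_sub]; congr 1; abel
    rw [heq]
    calc ‖PM u - PM (u - PK u)‖ ≤ ‖PM u‖ + ‖PM (u - PK u)‖ := norm_sub_le _ _
      _ ≤ ‖PM u‖ + ‖u - PK u‖ := by gcongr; exact hMle _
  have hc0' : (0 : ℝ) ≤ c := c.2
  have h3 : ‖PK u‖ ≤ (c : ℝ) * (‖PM u‖ + ‖u - PK u‖) :=
    h1.trans (by nlinarith)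
  nlinarith [sq_nonneg (‖PM u‖ - ‖u - PK u‖), norm_nonneg (PK u),
    sq_nonneg ((c : ℝ) * (‖PM u‖ + ‖u - PK u‖)), mul_self_nonneg (‖PM u‖ + ‖u - PK u‖),
    norm_nonneg (PM u), norm_nonneg (u - PK u)]
end

section
/- Let H be a real Hilbert space, let A : H → H be a bounded self-adjoint nonnegative linear operator whose kernel is finite-dimensional, let P denote the orthogonal projection onto ker A, and assume there is ν > 0 with ⟨A u, u⟩ ≥ ν ‖u − P u‖² for every u ∈ H. Let M be a closed subspace of H with M^⊥ ∩ ker A = {0}, let P_M be the orthogonal projection onto M, let p > 0, and define F(u) := (1/(p+2)) ‖P_M u‖^{p+2}. Then there exists a constant c such that ‖u‖^{p+2} ≤ c · (p + 2 + ⟨A u, u⟩^{p/2}) · (F(u) + ⟨A u, u⟩) for every u ∈ H. -/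
open scoped RealInnerProductSpace

lemma proj_pythagoras' {H : Type*} [NormedAddCommGroup H] [InnerProductSpace ℝ H]
    (K : Submodule ℝ H) (x y : H) (hx : x ∈ K) (hy : y ∈ Kᗮ) :
    ‖x + y‖ ^ 2 = ‖x‖ ^ 2 + ‖y‖ ^ 2 := by
  rw [norm_add_sq_real, Submodule.inner_right_of_mem_orthogonal hx hy]; ring

lemma two_rpow_ineq' {x y q : ℝ} (hx : 0 ≤ x) (hy : 0 ≤ y) (hq : 0 ≤ q) :
    (x + y) ^ q ≤ 2 ^ q * (x ^ q + y ^ q) := by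
  have hmax : x + y ≤ 2 * max x y := by
    rcases le_total x y with h | h <;> simp [max_eq_right, max_eq_left, h] <;> nlinarith
  calc (x + y) ^ q ≤ (2 * max x y) ^ q :=
        Real.rpow_le_rpow (by positivity) hmax hq
    _ = 2 ^ q * (max x y) ^ q := Real.mul_rpow (by norm_num) (le_max_of_le_left hx)
    _ ≤ 2 ^ q * (x ^ q + y ^ q) := by
        gcongr 2 ^ q * ?_
        rcases le_total x y with h | h
        · rw [max_eq_right h]; nlinarith [Real.rpow_nonneg hx q]
        · rw [max_eq_left h]; nlinarith [Real.rpow_nonneg hy q]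

/-- Verification of hypothesis (Hp6) for the nonlocal projection nonlinearity: with
`F(u) = (1/(p+2))‖P_M u‖^{p+2}`, there is `c` such that
`‖u‖^{p+2} ≤ c (p + 2 + ⟨Au,u⟩^{p/2})(F(u) + ⟨Au,u⟩)` for every `u`. -/
theorem stmt_13
    {H : Type*} [NormedAddCommGroup H] [InnerProductSpace ℝ H] [CompleteSpace H]
    (A : H →L[ℝ] H) (hA : IsSelfAdjoint A) (hApos : ∀ u : H, 0 ≤ ⟪A u, u⟫)
    [FiniteDimensional ℝ (LinearMap.ker (A : H →ₗ[ℝ] H))]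
    (P : H →L[ℝ] H)
    (hP : ∀ x : H, P x ∈ LinearMap.ker (A : H →ₗ[ℝ] H) ∧ x - P x ∈ (LinearMap.ker (A : H →ₗ[ℝ] H))ᗮ)
    (ν : ℝ) (hν : 0 < ν)
    (hcoerc : ∀ u : H, ν * ‖u - P u‖^2 ≤ ⟪A u, u⟫)
    (M : Submodule ℝ H) (hMclosed : IsClosed (M : Set H))
    (hKM : Mᗮ ⊓ LinearMap.ker (A : H →ₗ[ℝ] H) = ⊥)
    (PM : H →L[ℝ] H)
    (hPM : ∀ x : H, PM x ∈ M ∧ x - PM x ∈ Mᗮ)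
    (p : ℝ) (hp : 0 < p) :
    ∃ c : ℝ, ∀ u : H,
      ‖u‖ ^ (p + 2) ≤
        c * (p + 2 + (⟪A u, u⟫) ^ (p/2)) *
          ((1/(p + 2)) * ‖PM u‖ ^ (p + 2) + ⟪A u, u⟫) := by
  classical
  set N := LinearMap.ker (A : H →ₗ[ℝ] H) with hN
  -- the restriction of PM to the kernel is injective, hence antilipschitz
  let f : N →ₗ[ℝ] H := (PM : H →ₗ[ℝ] H).comp N.subtype
  have hker : LinearMap.ker f = ⊥ := by
    rw [LinearMap.ker_eq_bot']
    intro v hv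
    have hvM : (v : H) ∈ Mᗮ := by
      have h2 := (hPM (v : H)).2
      have : PM (v : H) = 0 := hv
      rwa [this, sub_zero] at h2
    have : (v : H) ∈ Mᗮ ⊓ N := ⟨hvM, v.2⟩
    rw [hKM] at this
    exact Subtype.ext (by simpa using this)
  obtain ⟨K, hK0, hK⟩ := f.exists_antilipschitzWith hker
  set c₂ : ℝ := (K : ℝ) with hc₂def
  have hc₂ : 0 ≤ c₂ := K.coe_nonneg
  -- norm bound for projections
  have hPMle : ∀ x : H, ‖PM x‖ ≤ ‖x‖ := by
    intro x
    have h := proj_pythagoras' M (PM x) (x - PM x) (hPM x).1 (hPM x).2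
    have e : PM x + (x - PM x) = x := by abel
    rw [e] at h
    nlinarith [norm_nonneg (PM x), norm_nonneg (x - PM x), norm_nonneg x]
  set a : ℝ := 2 * c₂ ^ 2 with hadef
  set b : ℝ := (2 * c₂ ^ 2 + 1) / ν with hbdef
  have hb : 0 ≤ b := by positivity
  -- the key quadratic estimate
  have key : ∀ u : H, ‖u‖ ^ 2 ≤ a * ‖PM u‖ ^ 2 + b * ⟪A u, u⟫ := by
    intro u
    have h1 : ‖u‖ ^ 2 = ‖P u‖ ^ 2 + ‖u - P u‖ ^ 2 := by
      have h := proj_pythagoras' N (P u) (u - P u) (hP u).1 (hP u).2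
      have e : P u + (u - P u) = u := by abel
      rwa [e] at h
    have h2 : ‖P u‖ ≤ c₂ * ‖PM (P u)‖ := by
      have := hK.le_mul_dist ⟨P u, (hP u).1⟩ 0
      simpa [f, dist_eq_norm] using this
    have h3 : ‖PM (P u)‖ ≤ ‖PM u‖ + ‖u - P u‖ := by
      have e : PM (P u) = PM u - PM (u - P u) := by
        rw [map_sub]; abel
      rw [e]
      exact (norm_sub_le _ _).trans (by linarith [hPMle (u - P u)])
    have h23 : ‖P u‖ ≤ c₂ * (‖PM u‖ + ‖u - P u‖) := by
      refine h2.trans ?_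
      exact mul_le_mul_of_nonneg_left h3 hc₂
    have h4 : ‖P u‖ ^ 2 ≤ 2 * c₂ ^ 2 * ‖PM u‖ ^ 2 + 2 * c₂ ^ 2 * ‖u - P u‖ ^ 2 := by
      nlinarith [norm_nonneg (P u), norm_nonneg (PM u), norm_nonneg (u - P u),
        sq_nonneg (‖PM u‖ - ‖u - P u‖), sq_nonneg c₂]
    have h6 : (2 * c₂ ^ 2 + 1) * ‖u - P u‖ ^ 2 ≤ b * ⟪A u, u⟫ := by
      rw [hbdef, div_mul_eq_mul_div, le_div_iff₀ hν]
      nlinarith [mul_le_mul_of_nonneg_left (hcoerc u)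
        (show (0:ℝ) ≤ 2 * c₂ ^ 2 + 1 by positivity)]
    rw [hadef]; linarith
  -- pass to powers
  set q : ℝ := (p + 2) / 2 with hqdef
  have hq : 0 ≤ q := by positivity
  refine ⟨2 ^ q * (a ^ q + b ^ q), fun u => ?_⟩
  set s : ℝ := ⟪A u, u⟫ with hsdef
  have hs : 0 ≤ s := hApos u
  set m : ℝ := ‖PM u‖ with hmdef
  have hm : 0 ≤ m := norm_nonneg _
  have hsq : s ^ q = s ^ (p/2) * s := by
    rcases eq_or_lt_of_le hs with h | h
    · rw [← h]
      rw [Real.zero_rpow (by positivity), Real.zero_rpow (by positivity), mul_zero]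
    · rw [show q = p/2 + 1 by rw [hqdef]; ring, Real.rpow_add h, Real.rpow_one]
  have hpow : ∀ x : ℝ, 0 ≤ x → (x ^ 2) ^ q = x ^ (p + 2) := by
    intro x hx
    rw [← Real.rpow_natCast x 2, ← Real.rpow_mul hx]
    norm_num [hqdef]
    ring_nf
  have step1 : ‖u‖ ^ (p + 2) ≤ (a * m ^ 2 + b * s) ^ q := by
    rw [← hpow ‖u‖ (norm_nonneg u)]
    exact Real.rpow_le_rpow (by positivity) (key u) hq
  have step2 : (a * m ^ 2 + b * s) ^ q ≤ 2 ^ q * (a ^ q * m ^ (p + 2) + b ^ q * (s ^ (p/2) * s)) := by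
    have h := two_rpow_ineq' (x := a * m ^ 2) (y := b * s) (by positivity) (by positivity) hq
    have e1 : (a * m ^ 2) ^ q = a ^ q * m ^ (p + 2) := by
      rw [Real.mul_rpow (by positivity) (by positivity), hpow m hm]
    have e2 : (b * s) ^ q = b ^ q * (s ^ (p/2) * s) := by
      rw [Real.mul_rpow hb hs, hsq]
    rw [e1, e2] at h
    exact h
  have hcnn : (0:ℝ) ≤ 2 ^ q * (a ^ q + b ^ q) := by positivity
  have hmF : m ^ (p + 2) = (p + 2) * ((1/(p+2)) * m ^ (p + 2)) := by
    field_simp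
  have hFnn : 0 ≤ (1/(p+2)) * m ^ (p + 2) := by positivity
  have hspnn : 0 ≤ s ^ (p/2) := Real.rpow_nonneg hs _
  have step3 : 2 ^ q * (a ^ q * m ^ (p + 2) + b ^ q * (s ^ (p/2) * s)) ≤
      2 ^ q * (a ^ q + b ^ q) * ((p + 2 + s ^ (p/2)) * ((1/(p+2)) * m ^ (p + 2) + s)) := by
    set F : ℝ := (1/(p+2)) * m ^ (p + 2) with hF
    have haq : 0 ≤ a ^ q := Real.rpow_nonneg (by positivity) _
    have hbq : 0 ≤ b ^ q := Real.rpow_nonneg hb _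
    have h2q : (0:ℝ) ≤ 2 ^ q := by positivity
    have key2 : a ^ q * m ^ (p + 2) + b ^ q * (s ^ (p/2) * s) ≤
        (a ^ q + b ^ q) * ((p + 2 + s ^ (p/2)) * (F + s)) := by
      rw [hmF]
      nlinarith [mul_nonneg haq hFnn, mul_nonneg hbq hFnn, mul_nonneg haq hs,
        mul_nonneg hbq hs, mul_nonneg (mul_nonneg haq hspnn) hs,
        mul_nonneg (mul_nonneg haq hspnn) hFnn,
        mul_nonneg (mul_nonneg hbq hspnn) hFnn, mul_nonneg hspnn hs]
    calc 2 ^ q * (a ^ q * m ^ (p + 2) + b ^ q * (s ^ (p/2) * s))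
        ≤ 2 ^ q * ((a ^ q + b ^ q) * ((p + 2 + s ^ (p/2)) * (F + s))) :=
          mul_le_mul_of_nonneg_left key2 h2q
      _ = 2 ^ q * (a ^ q + b ^ q) * ((p + 2 + s ^ (p/2)) * (F + s)) := by ring
  calc ‖u‖ ^ (p + 2) ≤ (a * m ^ 2 + b * s) ^ q := step1
    _ ≤ 2 ^ q * (a ^ q * m ^ (p + 2) + b ^ q * (s ^ (p/2) * s)) := step2
    _ ≤ 2 ^ q * (a ^ q + b ^ q) * ((p + 2 + s ^ (p/2)) * ((1/(p+2)) * m ^ (p + 2) + s)) := step3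
    _ = 2 ^ q * (a ^ q + b ^ q) * (p + 2 + s ^ (p/2)) * ((1/(p+2)) * m ^ (p + 2) + s) := by ring
end

section
/- Let p > 0. Assume ker A ≠ {0}, ker A is finite-dimensional, there exists ν > 0 with ⟨A u, u⟩ ≥ ν ‖u‖² for every u ∈ (ker A)^⊥, and M is a closed subspace of H with M^⊥ ∩ ker A = {0}, with orthogonal projection P_M onto M. Then every twice continuously differentiable solution u : [0,∞) → H of the equation u''(t) + u'(t) + A u(t) + ‖P_M u(t)‖^{p} P_M u(t) = 0 admits a constant M₁ such that ‖u(t)‖ ≤ M₁ (1+t)^{-1/p} for all t ≥ 0. -/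
open scoped RealInnerProductSpace
open Set

private lemma rpow_add_le (X Y q : ℝ) (hX : 0 ≤ X) (hY : 0 ≤ Y) (hq : 0 ≤ q) :
    (X + Y) ^ q ≤ 2 ^ q * (X ^ q + Y ^ q) := by
  have hm : 0 ≤ max X Y := le_trans hX (le_max_left _ _)
  have h1 : X + Y ≤ 2 * max X Y := by
    rcases le_total X Y with h | h
    · rw [max_eq_right h]; linarith
    · rw [max_eq_left h]; linarith
  have h2 : (X + Y) ^ q ≤ (2 * max X Y) ^ q :=
    Real.rpow_le_rpow (by linarith) h1 hq
  have h3 : (2 * max X Y) ^ q = 2 ^ q * (max X Y) ^ q :=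
    Real.mul_rpow (by norm_num) hm
  have h4 : (max X Y) ^ q ≤ X ^ q + Y ^ q := by
    rcases le_total X Y with h | h
    · rw [max_eq_right h]
      have := Real.rpow_nonneg hX q; linarith
    · rw [max_eq_left h]
      have := Real.rpow_nonneg hY q; linarith
  have h5 : (0:ℝ) < 2 ^ q := Real.rpow_pos_of_pos (by norm_num) q
  calc (X + Y) ^ q ≤ 2 ^ q * (max X Y) ^ q := by rw [← h3]; exact h2
    _ ≤ 2 ^ q * (X ^ q + Y ^ q) := by nlinarith

private lemma sq_rpow (x : ℝ) (hx : 0 ≤ x) (e : ℝ) : (x ^ 2) ^ e = x ^ (2 * e) := by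
  rw [← Real.rpow_natCast x 2, ← Real.rpow_mul hx]
  norm_num

private lemma le_init_of_deriv_nonpos {f f' : ℝ → ℝ}
    (hf : ∀ t ∈ Ici (0:ℝ), HasDerivWithinAt f (f' t) (Ici 0) t)
    (h' : ∀ t ∈ Ici (0:ℝ), f' t ≤ 0) : ∀ t ∈ Ici (0:ℝ), f t ≤ f 0 := by
  intro T hT
  have hT0 : (0:ℝ) ≤ T := hT
  have hc : ContinuousOn f (Icc (0:ℝ) T) :=
    fun t ht => ((hf t ht.1).continuousWithinAt).mono Icc_subset_Ici_self
  have hanti : AntitoneOn f (Icc (0:ℝ) T) := by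
    apply antitoneOn_of_deriv_nonpos (convex_Icc 0 T) hc
    · intro x hx
      rw [interior_Icc] at hx
      exact (((hf x hx.1.le).hasDerivAt (Ici_mem_nhds hx.1)).differentiableAt).differentiableWithinAt
    · intro x hx
      rw [interior_Icc] at hx
      rw [((hf x hx.1.le).hasDerivAt (Ici_mem_nhds hx.1)).deriv]
      exact h' x hx.1.le
  exact hanti (left_mem_Icc.mpr hT0) (right_mem_Icc.mpr hT0) hT0

private lemma ode_comparison {L B L' B' : ℝ → ℝ} {γ q : ℝ} (hγ : 0 < γ) (hq : 0 ≤ q)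
    (hL : ∀ t ∈ Ici (0:ℝ), HasDerivWithinAt L (L' t) (Ici 0) t)
    (hB : ∀ t ∈ Ici (0:ℝ), HasDerivWithinAt B (B' t) (Ici 0) t)
    (h0 : L 0 ≤ B 0)
    (hBpos : ∀ t ∈ Ici (0:ℝ), 0 ≤ B t)
    (hL' : ∀ t ∈ Ici (0:ℝ), L' t ≤ -γ * L t ^ q)
    (hB' : ∀ t ∈ Ici (0:ℝ), -γ * B t ^ q ≤ B' t) :
    ∀ t ∈ Ici (0:ℝ), L t ≤ B t := by
  intro T hT
  by_contra hcon
  push_neg at hcon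
  have hT0 : (0:ℝ) ≤ T := hT
  set h : ℝ → ℝ := fun t => L t - B t with hh
  have hLc : ContinuousOn L (Ici (0:ℝ)) := fun t ht => (hL t ht).continuousWithinAt
  have hBc : ContinuousOn B (Ici (0:ℝ)) := fun t ht => (hB t ht).continuousWithinAt
  have hsub : Icc (0:ℝ) T ⊆ Ici 0 := Icc_subset_Ici_self
  have hcont : ContinuousOn h (Icc (0:ℝ) T) := (hLc.mono hsub).sub (hBc.mono hsub)
  set S : Set ℝ := Icc (0:ℝ) T ∩ h ⁻¹' Iic 0 with hS
  have hScl : IsClosed S := hcont.preimage_isClosed_of_isClosed isClosed_Icc isClosed_Iic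
  have h0S : (0:ℝ) ∈ S := ⟨⟨le_rfl, hT0⟩, by simpa [hh] using sub_nonpos.mpr h0⟩
  have hbdd : BddAbove S := ⟨T, fun x hx => hx.1.2⟩
  set c := sSup S with hc_def
  have hcS : c ∈ S := hScl.csSup_mem ⟨0, h0S⟩ hbdd
  have hc0 : 0 ≤ c := hcS.1.1
  have hcT : c ≤ T := hcS.1.2
  have hhc : h c ≤ 0 := hcS.2
  have hhT : 0 < h T := sub_pos.mpr hcon
  have hcT' : c < T := by
    rcases lt_or_eq_of_le hcT with hlt | he
    · exact hlt
    · exfalso; rw [he] at hhc; linarith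
  have hpos : ∀ x ∈ Ioo c T, 0 < h x := by
    intro x hx
    by_contra hx'
    push_neg at hx'
    have hxS : x ∈ S := ⟨⟨le_trans hc0 hx.1.le, hx.2.le⟩, hx'⟩
    exact absurd (le_csSup hbdd hxS) (not_le.mpr hx.1)
  have hanti : AntitoneOn h (Icc c T) := by
    apply antitoneOn_of_deriv_nonpos (convex_Icc c T)
        (hcont.mono (Icc_subset_Icc_left hc0))
    · intro x hx
      rw [interior_Icc] at hx
      have hx0 : (0:ℝ) < x := lt_of_le_of_lt hc0 hx.1
      have hLx : HasDerivAt L (L' x) x := (hL x hx0.le).hasDerivAt (Ici_mem_nhds hx0)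
      have hBx : HasDerivAt B (B' x) x := (hB x hx0.le).hasDerivAt (Ici_mem_nhds hx0)
      exact ((hLx.sub hBx).differentiableAt).differentiableWithinAt
    · intro x hx
      rw [interior_Icc] at hx
      have hx0 : (0:ℝ) < x := lt_of_le_of_lt hc0 hx.1
      have hLx : HasDerivAt L (L' x) x := (hL x hx0.le).hasDerivAt (Ici_mem_nhds hx0)
      have hBx : HasDerivAt B (B' x) x := (hB x hx0.le).hasDerivAt (Ici_mem_nhds hx0)
      have hd : HasDerivAt h (L' x - B' x) x := hLx.sub hBx
      rw [hd.deriv]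
      have hBx0 : 0 ≤ B x := hBpos x hx0.le
      have hBL : B x ≤ L x := by
        have := hpos x hx
        simp only [hh] at this; linarith
      have h1 : B x ^ q ≤ L x ^ q := Real.rpow_le_rpow hBx0 hBL hq
      have h2 : L' x ≤ -γ * L x ^ q := hL' x hx0.le
      have h3 : -γ * B x ^ q ≤ B' x := hB' x hx0.le
      nlinarith
  have := hanti (left_mem_Icc.mpr hcT) (right_mem_Icc.mpr hcT) hcT
  simp only [hh] at this hhc
  linarith

set_option maxHeartbeats 1000000 in
/-- Decay for all solutions of the nonlocal equation
`u'' + u' + A u + ‖P_M u‖^p P_M u = 0`: under the stated hypotheses on `A` and `M`,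
every twice continuously differentiable solution satisfies `‖u(t)‖ ≤ M₁ (1+t)^{-1/p}`. -/
theorem stmt_14
    {H : Type*} [NormedAddCommGroup H] [InnerProductSpace ℝ H] [CompleteSpace H]
    (A : H →L[ℝ] H) (hA : IsSelfAdjoint A) (hApos : ∀ u : H, 0 ≤ ⟪A u, u⟫)
    (hker : LinearMap.ker (A : H →ₗ[ℝ] H) ≠ ⊥)
    [FiniteDimensional ℝ (LinearMap.ker (A : H →ₗ[ℝ] H))]
    (ν : ℝ) (hν : 0 < ν)
    (hcoerc : ∀ u ∈ (LinearMap.ker (A : H →ₗ[ℝ] H))ᗮ, ν * ‖u‖^2 ≤ ⟪A u, u⟫)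
    (M : Submodule ℝ H) (hMclosed : IsClosed (M : Set H))
    (hKM : Mᗮ ⊓ LinearMap.ker (A : H →ₗ[ℝ] H) = ⊥)
    (PM : H →L[ℝ] H)
    (hPM : ∀ x : H, PM x ∈ M ∧ x - PM x ∈ Mᗮ)
    (p : ℝ) (hp : 0 < p)
    (u v w : ℝ → H)
    (hu : ∀ t ∈ Set.Ici (0:ℝ), HasDerivWithinAt u (v t) (Set.Ici 0) t)
    (hv : ∀ t ∈ Set.Ici (0:ℝ), HasDerivWithinAt v (w t) (Set.Ici 0) t)
    (hw : ContinuousOn w (Set.Ici 0))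
    (heq : ∀ t ∈ Set.Ici (0:ℝ),
      w t + v t + A (u t) + ‖PM (u t)‖ ^ p • PM (u t) = 0) :
    ∃ M₁ : ℝ, ∀ t ∈ Set.Ici (0:ℝ), ‖u t‖ ≤ M₁ * (1 + t) ^ (-(1/p)) := by
  classical
  have hsymm : ∀ x y : H, ⟪A x, y⟫ = ⟪x, A y⟫ := fun x y => hA.isSymmetric x y
  -- basic projection facts
  have hMO : ∀ x y : H, ⟪PM x, y - PM y⟫ = 0 := fun x y =>
    Submodule.inner_right_of_mem_orthogonal (hPM x).1 (hPM y).2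
  have hPMid : ∀ x y : H, ⟪PM x, PM y⟫ = ⟪PM x, y⟫ := by
    intro x y
    have h := hMO x y
    rw [inner_sub_right] at h
    linarith
  have hPMle : ∀ x : H, ‖PM x‖ ≤ ‖x‖ := by
    intro x
    have h1 : ⟪PM x, PM x⟫ = ⟪PM x, x⟫ := hPMid x x
    have h2 : ‖PM x‖ * ‖PM x‖ = ⟪PM x, PM x⟫ := (real_inner_self_eq_norm_mul_norm (PM x)).symm
    have h3 : ⟪PM x, x⟫ ≤ ‖PM x‖ * ‖x‖ := real_inner_le_norm _ _
    nlinarith [norm_nonneg (PM x), norm_nonneg x]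
  -- antilipschitz constant on the kernel
  haveI : CompleteSpace (LinearMap.ker (A : H →ₗ[ℝ] H)) := FiniteDimensional.complete ℝ _
  have hkerbot : LinearMap.ker (PM.toLinearMap.comp (LinearMap.ker (A : H →ₗ[ℝ] H)).subtype) = ⊥ := by
    rw [LinearMap.ker_eq_bot']
    intro y hy
    simp only [LinearMap.comp_apply, Submodule.subtype_apply,
      ContinuousLinearMap.coe_coe] at hy
    have h1 : (y : H) ∈ Mᗮ := by
      have := (hPM (y : H)).2
      rwa [hy, sub_zero] at this
    have h2 : (y : H) ∈ Mᗮ ⊓ LinearMap.ker (A : H →ₗ[ℝ] H) := ⟨h1, y.2⟩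
    rw [hKM, Submodule.mem_bot] at h2
    exact Subtype.ext h2
  obtain ⟨cK, hcK0, hcK⟩ :=
    (PM.toLinearMap.comp (LinearMap.ker (A : H →ₗ[ℝ] H)).subtype).exists_antilipschitzWith hkerbot
  set c : ℝ := (cK : ℝ) with hc_def
  have hc0 : 0 < c := hcK0
  have hkerlip : ∀ x : H, x ∈ LinearMap.ker (A : H →ₗ[ℝ] H) → ‖x‖ ≤ c * ‖PM x‖ := by
    intro x hx
    have h := hcK.le_mul_dist ⟨x, hx⟩ 0
    simpa [dist_eq_norm] using h
  -- pointwise coercivity-type inequality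
  set C₁ : ℝ := 2*c^2 + 2*(c+1)^2/ν with hC₁_def
  have hC₁0 : 0 < C₁ := by positivity
  have hpoint : ∀ x : H, ‖x‖^2 ≤ C₁ * (‖PM x‖^2 + ⟪A x, x⟫) := by
    intro x
    set y : H := (Submodule.orthogonalProjectionOnto (LinearMap.ker (A : H →ₗ[ℝ] H)) x : H) with hy_def
    set z : H := x - y with hz_def
    have hyK : y ∈ LinearMap.ker (A : H →ₗ[ℝ] H) := (Submodule.orthogonalProjectionOnto (LinearMap.ker (A : H →ₗ[ℝ] H)) x).2
    have hzK : z ∈ (LinearMap.ker (A : H →ₗ[ℝ] H))ᗮ := Submodule.sub_starProjection_mem_orthogonal (K := LinearMap.ker (A : H →ₗ[ℝ] H)) x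
    have hxyz : x = y + z := by rw [hz_def]; abel
    have hAy : A y = 0 := LinearMap.mem_ker.mp hyK
    have hAx : ⟪A x, x⟫ = ⟪A z, z⟫ := by
      have hAxz : A x = A z := by
        conv_lhs => rw [hxyz]
        rw [map_add, hAy, zero_add]
      have hzy : ⟪A z, y⟫ = 0 := by rw [hsymm z y, hAy, inner_zero_right]
      conv_lhs => rw [hAxz, hxyz]
      rw [inner_add_right, hzy, zero_add]
    have hνz : ν * ‖z‖^2 ≤ ⟪A z, z⟫ := hcoerc z hzK
    have hyb : ‖y‖ ≤ c * ‖PM y‖ := hkerlip y hyK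
    have hPMy : PM y = PM x - PM z := by
      have : PM x = PM y + PM z := by conv_lhs => rw [hxyz, map_add]
      rw [this]; abel
    have h1 : ‖PM y‖ ≤ ‖PM x‖ + ‖z‖ := by
      rw [hPMy]
      exact (norm_sub_le _ _).trans (by have := hPMle z; linarith)
    have h2 : ‖x‖ ≤ ‖y‖ + ‖z‖ := by
      conv_lhs => rw [hxyz]
      exact norm_add_le y z
    have h3 : ‖x‖ ≤ c*‖PM x‖ + (c+1)*‖z‖ := by nlinarith [norm_nonneg z, norm_nonneg (PM x)]
    have h4 : ‖x‖^2 ≤ 2*c^2*‖PM x‖^2 + 2*(c+1)^2*‖z‖^2 := by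
      nlinarith [sq_nonneg (c*‖PM x‖ - (c+1)*‖z‖), norm_nonneg x]
    have h5 : 2*(c+1)^2*‖z‖^2 ≤ (2*(c+1)^2/ν) * ⟪A x, x⟫ := by
      rw [hAx]
      rw [div_mul_eq_mul_div, le_div_iff₀ hν]
      nlinarith [sq_nonneg (c+1)]
    have h6 : 0 ≤ ⟪A x, x⟫ := hApos x
    have h7 : 0 ≤ ‖PM x‖^2 := sq_nonneg _
    have e1 : 0 ≤ 2*c^2 * ⟪A x, x⟫ := mul_nonneg (by positivity) h6
    have e2 : 0 ≤ (2*(c+1)^2/ν) * ‖PM x‖^2 := mul_nonneg (by positivity) h7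
    have expand : (2*c^2 + 2*(c+1)^2/ν) * (‖PM x‖^2 + ⟪A x, x⟫)
        = 2*c^2*‖PM x‖^2 + 2*c^2*⟪A x, x⟫
          + (2*(c+1)^2/ν)*‖PM x‖^2 + (2*(c+1)^2/ν)*⟪A x, x⟫ := by ring
    rw [hC₁_def, expand]
    linarith [h4, h5, e1, e2]
  clear_value c C₁
  -- scalar quantities along the trajectory
  set q : ℝ := (p+2)/2 with hq_def
  have hq1 : 1 ≤ q := by rw [hq_def]; linarith
  have hqpos : (0:ℝ) < q := by linarith
  have hq0 : (0:ℝ) ≤ q := by linarith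
  have hqm1 : (0:ℝ) ≤ q - 1 := by linarith
  have hqne : q ≠ 0 := ne_of_gt hqpos
  clear_value q
  set n : ℝ → ℝ := fun t => ⟪v t, v t⟫ with hn_def
  set aa : ℝ → ℝ := fun t => ⟪A (u t), u t⟫ with haa_def
  set g : ℝ → ℝ := fun t => ⟪PM (u t), PM (u t)⟫ with hg_def
  set G : ℝ → ℝ := fun t => g t ^ q with hG_def
  set rr : ℝ → ℝ := fun t => ⟪v t, u t⟫ with hrr_def
  set ss : ℝ → ℝ := fun t => ⟪u t, u t⟫ with hss_def
  set E : ℝ → ℝ := fun t => n t / 2 + aa t / 2 + G t / (p+2) with hE_def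
  set L : ℝ → ℝ := fun t => E t + rr t / 2 + ss t / 4 with hLfun_def
  set D : ℝ → ℝ := fun t => n t + aa t + G t with hD_def
  have hg_norm : ∀ t, g t = ‖PM (u t)‖^2 := fun t => real_inner_self_eq_norm_sq _
  have hn_norm : ∀ t, n t = ‖v t‖^2 := fun t => real_inner_self_eq_norm_sq _
  have hss_norm : ∀ t, ss t = ‖u t‖^2 := fun t => real_inner_self_eq_norm_sq _
  have hg0 : ∀ t, 0 ≤ g t := fun t => real_inner_self_nonneg
  have hn0 : ∀ t, 0 ≤ n t := fun t => real_inner_self_nonneg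
  have hss0 : ∀ t, 0 ≤ ss t := fun t => real_inner_self_nonneg
  have haa0 : ∀ t, 0 ≤ aa t := fun t => hApos (u t)
  have hG0 : ∀ t, 0 ≤ G t := fun t => Real.rpow_nonneg (hg0 t) q
  have hpow_g : ∀ t, ‖PM (u t)‖ ^ p = g t ^ (q-1) := by
    intro t
    rw [hg_norm t, sq_rpow _ (norm_nonneg _), show 2*(q-1) = p by rw [hq_def]; ring]
  have hpow_G : ∀ t, ‖PM (u t)‖ ^ p * g t = G t := by
    intro t
    rw [hpow_g t]
    calc g t ^ (q-1) * g t = g t ^ (q-1) * g t ^ (1:ℝ) := by rw [Real.rpow_one]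
      _ = g t ^ ((q-1)+1) := (Real.rpow_add_of_nonneg (hg0 t) hqm1 zero_le_one).symm
      _ = g t ^ q := by ring_nf
  -- derivative computations
  have hderivs : ∀ t ∈ Set.Ici (0:ℝ),
      HasDerivWithinAt E (-(n t)) (Set.Ici 0) t ∧
      HasDerivWithinAt L (-(D t)/2) (Set.Ici 0) t := by
    intro t ht
    have hu' := hu t ht
    have hv' := hv t ht
    have hAu : HasDerivWithinAt (fun τ => A (u τ)) (A (v t)) (Set.Ici 0) t :=
      (A.hasFDerivAt (x := u t)).comp_hasDerivWithinAt t hu'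
    have hPMu : HasDerivWithinAt (fun τ => PM (u τ)) (PM (v t)) (Set.Ici 0) t :=
      (PM.hasFDerivAt (x := u t)).comp_hasDerivWithinAt t hu'
    have hn' : HasDerivWithinAt n (⟪v t, w t⟫ + ⟪w t, v t⟫) (Set.Ici 0) t :=
      HasDerivWithinAt.inner ℝ hv' hv'
    have haa' : HasDerivWithinAt aa (⟪A (u t), v t⟫ + ⟪A (v t), u t⟫) (Set.Ici 0) t :=
      HasDerivWithinAt.inner ℝ hAu hu'
    have hg' : HasDerivWithinAt g (⟪PM (u t), PM (v t)⟫ + ⟪PM (v t), PM (u t)⟫) (Set.Ici 0) t :=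
      HasDerivWithinAt.inner ℝ hPMu hPMu
    have hrr' : HasDerivWithinAt rr (⟪v t, v t⟫ + ⟪w t, u t⟫) (Set.Ici 0) t :=
      HasDerivWithinAt.inner ℝ hv' hu'
    have hss' : HasDerivWithinAt ss (⟪u t, v t⟫ + ⟪v t, u t⟫) (Set.Ici 0) t :=
      HasDerivWithinAt.inner ℝ hu' hu'
    have hG' : HasDerivWithinAt G
        (q * g t ^ (q-1) * (⟪PM (u t), PM (v t)⟫ + ⟪PM (v t), PM (u t)⟫)) (Set.Ici 0) t :=
      (Real.hasDerivAt_rpow_const (Or.inr hq1)).comp_hasDerivWithinAt t hg'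
    -- the equation
    have hw_eq : w t = -(v t + A (u t) + ‖PM (u t)‖ ^ p • PM (u t)) :=
      eq_neg_of_add_eq_zero_left (by rw [← heq t ht]; abel)
    -- inner product identities
    have hvw : ⟪v t, w t⟫ = -(n t) - ⟪A (u t), v t⟫ - ‖PM (u t)‖^p * ⟪PM (u t), v t⟫ := by
      rw [hw_eq, inner_neg_right, inner_add_right, inner_add_right, real_inner_smul_right,
        real_inner_comm (v t) (A (u t)), real_inner_comm (v t) (PM (u t))]
      simp only [hn_def]
      ring
    have hwv : ⟪w t, v t⟫ = ⟪v t, w t⟫ := real_inner_comm _ _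
    have hAvu : ⟪A (v t), u t⟫ = ⟪A (u t), v t⟫ := by
      rw [hsymm (v t) (u t), real_inner_comm]
    have hPMuu : ⟪PM (u t), u t⟫ = g t := (hPMid (u t) (u t)).symm
    have hwu : ⟪w t, u t⟫ = -(rr t) - aa t - G t := by
      rw [hw_eq, inner_neg_left, inner_add_left, inner_add_left, real_inner_smul_left,
        hPMuu, hpow_G t]
      simp only [hrr_def, haa_def]
      ring
    have hPMuv : ⟪PM (u t), PM (v t)⟫ = ⟪PM (u t), v t⟫ := hPMid (u t) (v t)
    have hPMvu : ⟪PM (v t), PM (u t)⟫ = ⟪PM (u t), v t⟫ := by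
      rw [real_inner_comm, hPMuv]
    have huv : ⟪u t, v t⟫ = rr t := real_inner_comm _ _
    -- E derivative
    have hEraw : HasDerivWithinAt E
        ((⟪v t, w t⟫ + ⟪w t, v t⟫)/2 + (⟪A (u t), v t⟫ + ⟪A (v t), u t⟫)/2
          + (q * g t ^ (q-1) * (⟪PM (u t), PM (v t)⟫ + ⟪PM (v t), PM (u t)⟫))/(p+2))
        (Set.Ici 0) t :=
      ((hn'.div_const 2).add (haa'.div_const 2)).add (hG'.div_const (p+2))
    have hEkey : (⟪v t, w t⟫ + ⟪w t, v t⟫)/2 + (⟪A (u t), v t⟫ + ⟪A (v t), u t⟫)/2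
          + (q * g t ^ (q-1) * (⟪PM (u t), PM (v t)⟫ + ⟪PM (v t), PM (u t)⟫))/(p+2)
        = -(n t) := by
      rw [hwv, hvw, hAvu, hPMuv, hPMvu, hpow_g t, hq_def]
      have hp2 : p + 2 ≠ 0 := by positivity
      field_simp
      ring
    have hE' : HasDerivWithinAt E (-(n t)) (Set.Ici 0) t := hEkey ▸ hEraw
    have hLraw : HasDerivWithinAt L
        (-(n t) + (⟪v t, v t⟫ + ⟪w t, u t⟫)/2 + (⟪u t, v t⟫ + ⟪v t, u t⟫)/4)
        (Set.Ici 0) t :=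
      (hE'.add (hrr'.div_const 2)).add (hss'.div_const 4)
    have hLkey : -(n t) + (⟪v t, v t⟫ + ⟪w t, u t⟫)/2 + (⟪u t, v t⟫ + ⟪v t, u t⟫)/4
        = -(D t)/2 := by
      rw [hwu, huv]
      simp only [hD_def, hn_def, hrr_def]
      ring
    exact ⟨hE', hLkey ▸ hLraw⟩
  have hn_eq : ∀ t, n t = ⟪v t, v t⟫ := fun t => rfl
  have haa_eq : ∀ t, aa t = ⟪A (u t), u t⟫ := fun t => rfl
  have hg_eq : ∀ t, g t = ⟪PM (u t), PM (u t)⟫ := fun t => rfl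
  have hG_eq : ∀ t, G t = g t ^ q := fun t => rfl
  have hrr_eq : ∀ t, rr t = ⟪v t, u t⟫ := fun t => rfl
  have hss_eq : ∀ t, ss t = ⟪u t, u t⟫ := fun t => rfl
  have hEt : ∀ t, E t = n t/2 + aa t/2 + G t/(p+2) := fun t => rfl
  have hLt : ∀ t, L t = E t + rr t/2 + ss t/4 := fun t => rfl
  have hDt : ∀ t, D t = n t + aa t + G t := fun t => rfl
  clear_value n aa g G rr ss E L D
  have hp2 : (0:ℝ) < p + 2 := by linarith
  -- energy is decreasing, basic bounds
  have hEmono : ∀ t ∈ Set.Ici (0:ℝ), E t ≤ E 0 :=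
    le_init_of_deriv_nonpos (fun t ht => (hderivs t ht).1)
      (fun t _ => neg_nonpos.mpr (hn0 t))
  have hGdiv : ∀ t, 0 ≤ G t/(p+2) := fun t => div_nonneg (hG0 t) hp2.le
  have hE00 : 0 ≤ E 0 := by
    rw [hEt 0]; linarith [hn0 0, haa0 0, hGdiv 0]
  set Dbound : ℝ := (p+6) * E 0 + 1 with hDb_def
  clear_value Dbound
  have hDbound0 : 0 < Dbound := by rw [hDb_def]; nlinarith [hE00]
  have hDbound : ∀ t ∈ Set.Ici (0:ℝ), D t ≤ Dbound := by
    intro t ht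
    have hE := hEmono t ht
    rw [hEt t] at hE
    have hGt : G t / (p+2) ≤ E 0 := by linarith [hn0 t, haa0 t]
    have hGt' : G t ≤ (p+2) * E 0 := by
      rw [div_le_iff₀ hp2] at hGt; linarith
    have hnt : n t ≤ 2 * E 0 := by linarith [haa0 t, hGdiv t]
    have haat : aa t ≤ 2 * E 0 := by linarith [hn0 t, hGdiv t]
    rw [hDt t, hDb_def]; linarith
  have hrr_bound : ∀ t, |rr t| ≤ n t + ss t / 4 := by
    intro t
    have h1 : |rr t| ≤ ‖v t‖ * ‖u t‖ := by
      rw [hrr_eq t]; exact abs_real_inner_le_norm _ _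
    have h2 : ‖v t‖ * ‖u t‖ ≤ ‖v t‖^2 + ‖u t‖^2/4 := by
      nlinarith [sq_nonneg (‖v t‖ - ‖u t‖/2)]
    rw [hn_norm t, hss_norm t]
    linarith
  have hLlow : ∀ t, ss t / 8 ≤ L t := by
    intro t
    have h := abs_le.mp (hrr_bound t)
    rw [hLt t, hEt t]
    linarith [hGdiv t, haa0 t, h.1]
  have hL0 : ∀ t, 0 ≤ L t := fun t => le_trans (by linarith [hss0 t]) (hLlow t)
  have hLup : ∀ t, L t ≤ (1 + C₁/2) * D t + (C₁/2) * g t := by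
    intro t
    have h := abs_le.mp (hrr_bound t)
    have hsb : ss t ≤ C₁ * (g t + aa t) := by
      have hpt := hpoint (u t)
      rw [← hss_norm t, ← hg_norm t, ← haa_eq t] at hpt
      exact hpt
    have hGG : G t/(p+2) ≤ G t := by
      rw [div_le_iff₀ hp2]; nlinarith [hG0 t]
    have e1 : (C₁/2) * aa t ≤ (C₁/2) * D t := by
      apply mul_le_mul_of_nonneg_left _ (by linarith : (0:ℝ) ≤ C₁/2)
      rw [hDt t]; linarith [hn0 t, hG0 t]
    rw [hLt t, hEt t]
    have hDexp : D t = n t + aa t + G t := hDt t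
    linarith [hsb, e1, h.1, h.2, hGG, hn0 t, haa0 t, hG0 t, hss0 t]
  -- the key differential inequality  L' ≤ -γ L^q
  set Cq : ℝ := 2 ^ q * (1 + C₁/2) ^ q * Dbound ^ (q-1) + 2 ^ q * (C₁/2) ^ q with hCq_def
  clear_value Cq
  have hCqpos : 0 < Cq := by
    rw [hCq_def]
    have h1 : 0 < 2 ^ q * (C₁/2) ^ q :=
      mul_pos (Real.rpow_pos_of_pos two_pos q)
        (Real.rpow_pos_of_pos (by linarith : (0:ℝ) < C₁/2) q)
    have h2 : 0 ≤ 2 ^ q * (1 + C₁/2) ^ q * Dbound ^ (q-1) :=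
      mul_nonneg (mul_nonneg (Real.rpow_nonneg (by norm_num) q)
        (Real.rpow_nonneg (by linarith : (0:ℝ) ≤ 1 + C₁/2) q)) (Real.rpow_nonneg hDbound0.le _)
    linarith
  have hLq : ∀ t ∈ Set.Ici (0:ℝ), L t ^ q ≤ Cq * D t := by
    intro t ht
    have hD0t : 0 ≤ D t := by rw [hDt t]; linarith [hn0 t, haa0 t, hG0 t]
    have hXpos : 0 ≤ (1 + C₁/2) * D t := mul_nonneg (by linarith) hD0t
    have hYpos : 0 ≤ (C₁/2) * g t := mul_nonneg (by linarith) (hg0 t)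
    have h1 : L t ^ q ≤ ((1 + C₁/2) * D t + (C₁/2) * g t) ^ q :=
      Real.rpow_le_rpow (hL0 t) (hLup t) hq0
    have h2 : ((1 + C₁/2) * D t + (C₁/2) * g t) ^ q
        ≤ 2 ^ q * (((1 + C₁/2) * D t) ^ q + ((C₁/2) * g t) ^ q) :=
      rpow_add_le _ _ q hXpos hYpos hq0
    have h3 : ((1 + C₁/2) * D t) ^ q = (1 + C₁/2) ^ q * D t ^ q :=
      Real.mul_rpow (by linarith) hD0t
    have h4 : ((C₁/2) * g t) ^ q = (C₁/2) ^ q * G t := by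
      rw [Real.mul_rpow (by linarith : (0:ℝ) ≤ C₁/2) (hg0 t), hG_eq t]
    have h5 : D t ^ q ≤ Dbound ^ (q-1) * D t := by
      rcases eq_or_lt_of_le hD0t with h|h
      · rw [← h, Real.zero_rpow hqne, mul_zero]
      · have e : D t ^ q = D t ^ (q-1) * D t := by
          have e0 := Real.rpow_add h (q-1) 1
          rw [Real.rpow_one, show q-1+1 = q from by ring] at e0
          exact e0
        rw [e]
        exact mul_le_mul_of_nonneg_right
          (Real.rpow_le_rpow hD0t (hDbound t ht) hqm1) hD0t
    have h6 : G t ≤ D t := by rw [hDt t]; linarith [hn0 t, haa0 t]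
    have c1 : (0:ℝ) ≤ 2 ^ q := Real.rpow_nonneg (by norm_num) q
    have c2 : (0:ℝ) ≤ (1 + C₁/2) ^ q := Real.rpow_nonneg (by linarith) q
    have c3 : (0:ℝ) ≤ (C₁/2) ^ q := Real.rpow_nonneg (by linarith) q
    have t1 : (1 + C₁/2) ^ q * D t ^ q ≤ (1 + C₁/2) ^ q * (Dbound ^ (q-1) * D t) :=
      mul_le_mul_of_nonneg_left h5 c2
    have t2 : (C₁/2) ^ q * G t ≤ (C₁/2) ^ q * D t := mul_le_mul_of_nonneg_left h6 c3
    have t3 : 2 ^ q * ((1 + C₁/2) ^ q * D t ^ q + (C₁/2) ^ q * G t)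
        ≤ 2 ^ q * ((1 + C₁/2) ^ q * (Dbound ^ (q-1) * D t) + (C₁/2) ^ q * D t) :=
      mul_le_mul_of_nonneg_left (by linarith) c1
    calc L t ^ q ≤ 2 ^ q * (((1 + C₁/2) * D t) ^ q + ((C₁/2) * g t) ^ q) := h1.trans h2
      _ = 2 ^ q * ((1 + C₁/2) ^ q * D t ^ q + (C₁/2) ^ q * G t) := by rw [h3, h4]
      _ ≤ 2 ^ q * ((1 + C₁/2) ^ q * (Dbound ^ (q-1) * D t) + (C₁/2) ^ q * D t) := t3
      _ = Cq * D t := by rw [hCq_def]; ring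
  set γ : ℝ := 1/(2*Cq) with hγ_def
  clear_value γ
  have hγpos : 0 < γ := by rw [hγ_def]; exact div_pos one_pos (by linarith)
  have hLdiff : ∀ t ∈ Set.Ici (0:ℝ), -(D t)/2 ≤ -γ * L t ^ q := by
    intro t ht
    have h := mul_le_mul_of_nonneg_left (hLq t ht) hγpos.le
    have e : γ * (Cq * D t) = D t / 2 := by
      rw [hγ_def]; field_simp
    linarith
  -- the comparison function
  set m : ℝ := 2/p with hm_def
  clear_value m
  have hmpos : 0 < m := by rw [hm_def]; exact div_pos two_pos hp
  set K₀ : ℝ := max (L 0) ((m/γ) ^ m) + 1 with hK₀_def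
  clear_value K₀
  have hK₀pos : 0 < K₀ := by
    rw [hK₀_def]
    have h := le_max_left (L 0) ((m/γ)^m)
    linarith [hL0 0]
  set B : ℝ → ℝ := fun t => K₀ * (1+t) ^ (-m) with hB_def
  set B' : ℝ → ℝ := fun t => K₀ * ((-m) * (1+t) ^ (-m-1) * 1) with hB'_def
  clear_value B B'
  have hBderiv : ∀ t ∈ Set.Ici (0:ℝ), HasDerivWithinAt B (B' t) (Set.Ici 0) t := by
    intro t ht
    have ht0 : (0:ℝ) ≤ t := ht
    have h1t : (0:ℝ) < 1 + t := by linarith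
    have hb : HasDerivWithinAt (fun τ : ℝ => 1 + τ) 1 (Set.Ici 0) t := by
      simpa using (hasDerivWithinAt_id t (Set.Ici 0)).const_add 1
    have hrp : HasDerivAt (fun x : ℝ => x ^ (-m)) ((-m) * (1+t) ^ (-m-1)) (1+t) :=
      Real.hasDerivAt_rpow_const (Or.inl h1t.ne')
    have h2 : HasDerivWithinAt (fun τ : ℝ => (1+τ) ^ (-m))
        ((-m) * (1+t) ^ (-m-1) * 1) (Set.Ici 0) t :=
      hrp.comp_hasDerivWithinAt t hb
    simpa [hB_def, hB'_def] using h2.const_mul K₀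
  have hpne : p ≠ 0 := hp.ne'
  have hmq1 : m * (q-1) = 1 := by rw [hm_def, hq_def]; field_simp; ring
  have hmq2 : (-m) * q = -m - 1 := by rw [hm_def, hq_def]; field_simp; ring
  have hK₀1 : (m/γ) ^ m ≤ K₀ := by
    rw [hK₀_def]; linarith [le_max_right (L 0) ((m/γ)^m)]
  have hK₀key : m * K₀ ≤ γ * K₀ ^ q := by
    have hmγ : 0 ≤ m/γ := div_nonneg hmpos.le hγpos.le
    have h1 : m/γ ≤ K₀ ^ (q-1) := by
      calc m/γ = ((m/γ) ^ m) ^ (q-1) := by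
            rw [← Real.rpow_mul hmγ, hmq1, Real.rpow_one]
        _ ≤ K₀ ^ (q-1) := Real.rpow_le_rpow (Real.rpow_nonneg hmγ m) hK₀1 hqm1
    have h2 : K₀ ^ q = K₀ ^ (q-1) * K₀ := by
      have e0 := Real.rpow_add hK₀pos (q-1) 1
      rw [Real.rpow_one, show q-1+1 = q from by ring] at e0
      exact e0
    have h3 : (m/γ) * K₀ ≤ K₀ ^ (q-1) * K₀ := mul_le_mul_of_nonneg_right h1 hK₀pos.le
    have h4 := mul_le_mul_of_nonneg_left h3 hγpos.le
    have h5 : γ * ((m/γ) * K₀) = m * K₀ := by field_simp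
    rw [h2]
    linarith
  have hB'ge : ∀ t ∈ Set.Ici (0:ℝ), -γ * B t ^ q ≤ B' t := by
    intro t ht
    have ht0 : (0:ℝ) ≤ t := ht
    have h1t : (0:ℝ) < 1 + t := by linarith
    have hX : 0 < (1+t) ^ (-m-1) := Real.rpow_pos_of_pos h1t _
    have hBq : B t ^ q = K₀ ^ q * (1+t) ^ (-m-1) := by
      simp only [hB_def]
      rw [Real.mul_rpow hK₀pos.le (Real.rpow_nonneg h1t.le _), ← Real.rpow_mul h1t.le,
        hmq2]
    simp only [hB'_def]
    rw [hBq]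
    have h := mul_le_mul_of_nonneg_right hK₀key hX.le
    nlinarith [h]
  have hcomp : ∀ t ∈ Set.Ici (0:ℝ), L t ≤ B t := by
    apply ode_comparison hγpos hq0 (fun t ht => (hderivs t ht).2) hBderiv
    · simp only [hB_def]
      have : ((1:ℝ)+0) ^ (-m) = 1 := by norm_num
      rw [this, mul_one, hK₀_def]
      linarith [le_max_left (L 0) ((m/γ)^m)]
    · intro t ht
      have ht0 : (0:ℝ) ≤ t := ht
      simp only [hB_def]
      exact mul_nonneg hK₀pos.le (Real.rpow_nonneg (by linarith) _)
    · exact hLdiff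
    · exact hB'ge
  -- conclusion
  refine ⟨Real.sqrt (8*K₀), ?_⟩
  intro t ht
  have ht0 : (0:ℝ) ≤ t := ht
  have h1t : (0:ℝ) < 1 + t := by linarith
  have hs8 : ss t ≤ 8 * (K₀ * (1+t)^(-m)) := by
    have h1 := hLlow t
    have h2 := hcomp t ht
    simp only [hB_def] at h2
    linarith
  have hnorm2 : ‖u t‖^2 ≤ 8*K₀ * (1+t)^(-m) := by
    rw [← hss_norm t]; linarith
  have hrhs : (Real.sqrt (8*K₀) * (1+t)^(-(1/p)))^2 = 8*K₀ * (1+t)^(-m) := by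
    rw [mul_pow, Real.sq_sqrt (by nlinarith [hK₀pos] : (0:ℝ) ≤ 8*K₀)]
    congr 1
    rw [← Real.rpow_natCast ((1+t)^(-(1/p))) 2, ← Real.rpow_mul h1t.le]
    congr 1
    rw [hm_def]; push_cast; ring
  have hrhs0 : 0 ≤ Real.sqrt (8*K₀) * (1+t)^(-(1/p)) :=
    mul_nonneg (Real.sqrt_nonneg _) (Real.rpow_nonneg h1t.le _)
  nlinarith [hnorm2, hrhs, norm_nonneg (u t), hrhs0]
end
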